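/- arXiv:1709.03398 — 8 statements merged into one kernel-verified Lean document; each statement's English description precedes it below -/
import Mathlib

section
/- The infinite product ∏_{n≥0} ((2n+1)/(2n+2))^{(-1)^{t_n}} converges and equals 1/√2 (the Woods–Robbins identity). -/
open Filter Finset Topology

/-- The Thue–Morse sequence: sum modulo 2 of the binary digits of `n`. -/
def tm (n : ℕ) : ℕ := (Nat.digits 2 n).sum % 2

namespace WRaux

noncomputable section

/-- `(-1)` to the binary digit sum. -/
def e (n : ℕ) : ℝ := (-1) ^ ((Nat.digits 2 n).sum)

lemma e_eq (n : ℕ) : e n = (-1 : ℝ) ^ tm n := by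
  unfold e tm
  rcases Nat.even_or_odd ((Nat.digits 2 n).sum) with h | h
  · rw [Nat.even_iff.mp h, h.neg_one_pow, pow_zero]
  · rw [Nat.odd_iff.mp h, h.neg_one_pow, pow_one]

lemma sum_digits_two_mul (n : ℕ) :
    (Nat.digits 2 (2 * n)).sum = (Nat.digits 2 n).sum := by
  rcases Nat.eq_zero_or_pos n with rfl | h
  · simp
  · rw [Nat.digits_def' (by norm_num) (by omega)]
    have h1 : 2 * n % 2 = 0 := by omega
    have h2 : 2 * n / 2 = n := by omega
    simp [h1, h2]

lemma sum_digits_two_mul_add_one (n : ℕ) :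
    (Nat.digits 2 (2 * n + 1)).sum = (Nat.digits 2 n).sum + 1 := by
  rw [Nat.digits_def' (by norm_num) (by omega)]
  have h1 : (2 * n + 1) % 2 = 1 := by omega
  have h2 : (2 * n + 1) / 2 = n := by omega
  simp only [h1, h2, List.sum_cons]
  omega

lemma e_two_mul (n : ℕ) : e (2 * n) = e n := by
  unfold e; rw [sum_digits_two_mul]

lemma e_two_mul_add_one (n : ℕ) : e (2 * n + 1) = - e n := by
  unfold e; rw [sum_digits_two_mul_add_one, pow_succ]; ring

lemma abs_e (n : ℕ) : |e n| = 1 := by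
  unfold e
  rcases Nat.even_or_odd ((Nat.digits 2 n).sum) with h | h
  · rw [h.neg_one_pow]; norm_num
  · rw [h.neg_one_pow]; norm_num

/-- summand for the main product -/
def u (n : ℕ) : ℝ := e n * Real.log ((2 * (n : ℝ) + 1) / (2 * (n : ℝ) + 2))

def v (n : ℕ) : ℝ := e n * Real.log ((2 * (n : ℝ)) / (2 * (n : ℝ) + 1))

def w (n : ℕ) : ℝ := e n * Real.log ((n : ℝ) / ((n : ℝ) + 1))

lemma w_two_mul (k : ℕ) : w (2 * k) = v k := by
  unfold w v
  rw [e_two_mul]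
  push_cast
  ring_nf

lemma w_two_mul_add_one (k : ℕ) : w (2 * k + 1) = -(u k) := by
  unfold w u
  rw [e_two_mul_add_one]
  push_cast
  ring_nf

lemma u_add_v (k : ℕ) (hk : 1 ≤ k) : u k + v k = w k := by
  have hk' : (1 : ℝ) ≤ (k : ℝ) := by exact_mod_cast hk
  unfold u v w
  rw [← mul_add, ← Real.log_mul (by positivity) (by positivity)]
  congr 2
  field_simp

def A (N : ℕ) : ℝ := ∑ n ∈ range N, u n
def B (N : ℕ) : ℝ := ∑ n ∈ range N, v n
def C (N : ℕ) : ℝ := ∑ n ∈ range N, w n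

lemma C_succ_succ (N : ℕ) : C (2 * (N + 1)) = C (2 * N) + w (2 * N) + w (2 * N + 1) := by
  simp only [C]
  rw [show 2 * (N + 1) = 2 * N + 1 + 1 by ring, sum_range_succ, sum_range_succ]

lemma C_two_mul (N : ℕ) : C (2 * N) = B N - A N := by
  induction N with
  | zero => simp [A, B, C]
  | succ N ih =>
    rw [C_succ_succ, ih, w_two_mul, w_two_mul_add_one]
    simp only [A, B, sum_range_succ]
    ring

lemma A_add_B (N : ℕ) (hN : 1 ≤ N) : A N + B N = C N - Real.log 2 := by
  induction N with
  | zero => omega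
  | succ N ih =>
    rcases Nat.eq_zero_or_pos N with rfl | hN'
    · have he0 : e 0 = 1 := by unfold e; simp
      have hu0 : u 0 = -Real.log 2 := by
        unfold u
        rw [he0]
        norm_num
        rw [Real.log_div (by norm_num) (by norm_num)]
        simp
      have hv0 : v 0 = 0 := by unfold v; norm_num
      have hw0 : w 0 = 0 := by unfold w; norm_num
      simp [A, B, C, sum_range_succ, hu0, hv0, hw0]
    · simp only [A, B, C, sum_range_succ] at *
      have h1 := u_add_v N hN'
      have h2 := ih hN'
      linarith

def g (k : ℕ) : ℝ := w (2 * k) + w (2 * k + 1)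

lemma C_two_mul_eq_sum_g (N : ℕ) : C (2 * N) = ∑ k ∈ range N, g k := by
  induction N with
  | zero => simp [C]
  | succ N ih =>
    rw [C_succ_succ, ih, sum_range_succ, g]
    ring

lemma g_bound (k : ℕ) (hk : 1 ≤ k) : ‖g k‖ ≤ 1 / (k : ℝ) ^ 2 := by
  have hk' : (1 : ℝ) ≤ (k : ℝ) := by exact_mod_cast hk
  have ha : (0 : ℝ) < 2 * (k : ℝ) / (2 * (k : ℝ) + 1) := by positivity
  have hb : (0 : ℝ) < (2 * (k : ℝ) + 1) / (2 * (k : ℝ) + 2) := by positivity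
  have hgk : g k = e k * (Real.log (2 * (k : ℝ) / (2 * (k : ℝ) + 1))
      - Real.log ((2 * (k : ℝ) + 1) / (2 * (k : ℝ) + 2))) := by
    rw [g, w_two_mul, w_two_mul_add_one, v, u]; ring
  set a : ℝ := 2 * (k : ℝ) / (2 * (k : ℝ) + 1) with ha_def
  set b : ℝ := (2 * (k : ℝ) + 1) / (2 * (k : ℝ) + 2) with hb_def
  have hne1 : (2 * (k : ℝ)) ≠ 0 := by positivity
  have hne2 : (2 * (k : ℝ) + 1) ≠ 0 := by positivity
  have hne3 : (2 * (k : ℝ) + 2) ≠ 0 := by positivity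
  have hdiv : b / a - 1 = 1 / (4 * (k : ℝ) ^ 2 + 4 * (k : ℝ)) := by
    rw [ha_def, hb_def]
    field_simp
    ring
  have h4 : (0 : ℝ) < 4 * (k : ℝ) ^ 2 + 4 * (k : ℝ) := by positivity
  have hba : 1 ≤ b / a := by nlinarith [one_div_pos.mpr h4]
  have hlog : Real.log (b / a) ≤ 1 / (k : ℝ) ^ 2 := by
    calc Real.log (b / a) ≤ b / a - 1 := Real.log_le_sub_one_of_pos (by positivity)
    _ = 1 / (4 * (k : ℝ) ^ 2 + 4 * (k : ℝ)) := hdiv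
    _ ≤ 1 / (k : ℝ) ^ 2 := by
        apply one_div_le_one_div_of_le (by positivity)
        nlinarith
  have hnorm : ‖g k‖ = Real.log (b / a) := by
    rw [hgk, Real.norm_eq_abs, abs_mul, abs_e, one_mul]
    have hd : Real.log a - Real.log b = -(Real.log (b / a)) := by
      rw [Real.log_div hb.ne' ha.ne']; ring
    rw [hd, abs_neg, abs_of_nonneg (Real.log_nonneg hba)]
  rw [hnorm]; exact hlog

lemma summable_g : Summable g := by
  apply Summable.of_norm_bounded_eventually_nat (g := fun k => 1 / (k : ℝ) ^ 2)
  · exact Real.summable_one_div_nat_pow.mpr one_lt_two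
  · filter_upwards [eventually_ge_atTop 1] with k hk using g_bound k hk

lemma tendsto_w_zero : Tendsto w atTop (𝓝 0) := by
  have h0 : Tendsto (fun n : ℕ => (n : ℝ) / ((n : ℝ) + 1)) atTop (𝓝 1) := by
    have h1 : Tendsto (fun n : ℕ => 1 - 1 / ((n : ℝ) + 1)) atTop (𝓝 1) := by
      have := tendsto_one_div_add_atTop_nhds_zero_nat (𝕜 := ℝ)
      have h2 := (tendsto_const_nhds (x := (1 : ℝ)) (f := atTop)).sub this
      simpa using h2
    apply h1.congr
    intro n
    have : ((n : ℝ) + 1) ≠ 0 := by positivity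
    field_simp
    ring
  have hlog : Tendsto (fun n : ℕ => Real.log ((n : ℝ) / ((n : ℝ) + 1))) atTop (𝓝 0) := by
    have := (Real.continuousAt_log one_ne_zero).tendsto.comp h0
    simpa [Function.comp_def] using this
  apply squeeze_zero_norm _ (by simpa using hlog.norm)
  intro n
  rw [w, Real.norm_eq_abs, abs_mul, abs_e, one_mul]

lemma tendsto_two_mul : Tendsto (fun N : ℕ => 2 * N) atTop atTop :=
  tendsto_atTop_atTop.mpr fun b => ⟨b, fun a ha => by omega⟩

/-- combining even and odd subsequences -/
lemma tendsto_of_even_odd {f : ℕ → ℝ} {l : ℝ}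
    (h1 : Tendsto (fun n => f (2 * n)) atTop (𝓝 l))
    (h2 : Tendsto (fun n => f (2 * n + 1)) atTop (𝓝 l)) :
    Tendsto f atTop (𝓝 l) := by
  rw [Metric.tendsto_atTop] at h1 h2 ⊢
  intro ε hε
  obtain ⟨N1, hN1⟩ := h1 ε hε
  obtain ⟨N2, hN2⟩ := h2 ε hε
  refine ⟨2 * N1 + 2 * N2 + 2, fun n hn => ?_⟩
  rcases Nat.even_or_odd n with ⟨k, hk⟩ | ⟨k, hk⟩
  · have hk' : n = 2 * k := by omega
    rw [hk']
    exact hN1 k (by omega)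
  · have hk' : n = 2 * k + 1 := by omega
    rw [hk']
    exact hN2 k (by omega)

lemma tendsto_C_even : Tendsto (fun N => C (2 * N)) atTop (𝓝 (∑' k, g k)) := by
  have := summable_g.hasSum.tendsto_sum_nat
  apply this.congr
  intro N
  exact (C_two_mul_eq_sum_g N).symm

lemma tendsto_C : Tendsto C atTop (𝓝 (∑' k, g k)) := by
  apply tendsto_of_even_odd tendsto_C_even
  have hw : Tendsto (fun N : ℕ => w (2 * N)) atTop (𝓝 0) :=
    tendsto_w_zero.comp tendsto_two_mul
  have := tendsto_C_even.add hw
  rw [add_zero] at this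
  apply this.congr
  intro N
  simp only [C, sum_range_succ]

lemma tendsto_A : Tendsto A atTop (𝓝 (-(Real.log 2) / 2)) := by
  have key : ∀ N, 1 ≤ N → A N = (C N - C (2 * N) - Real.log 2) / 2 := by
    intro N hN
    have h1 := A_add_B N hN
    have h2 := C_two_mul N
    linarith
  have h3 : Tendsto (fun N => (C N - C (2 * N) - Real.log 2) / 2) atTop
      (𝓝 ((∑' k, g k - ∑' k, g k - Real.log 2) / 2)) :=
    ((tendsto_C.sub tendsto_C_even).sub tendsto_const_nhds).div_const 2
  have h4 : (∑' k, g k - ∑' k, g k - Real.log 2) / 2 = -(Real.log 2) / 2 := by ring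
  rw [h4] at h3
  apply h3.congr'
  filter_upwards [eventually_ge_atTop 1] with N hN
  exact (key N hN).symm

end

end WRaux

/-- The Woods–Robbins identity. -/
theorem woods_robbins :
    Tendsto (fun N => ∏ n ∈ Finset.range N,
        ((2 * (n : ℝ) + 1) / (2 * (n : ℝ) + 2)) ^ ((-1 : ℤ) ^ tm n)) atTop
      (𝓝 (1 / Real.sqrt 2)) := by
  have factor_eq : ∀ n : ℕ, ((2 * (n : ℝ) + 1) / (2 * (n : ℝ) + 2)) ^ ((-1 : ℤ) ^ tm n)
      = Real.exp (WRaux.u n) := by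
    intro n
    have hpos : (0 : ℝ) < (2 * (n : ℝ) + 1) / (2 * (n : ℝ) + 2) := by positivity
    rw [WRaux.u, WRaux.e_eq]
    rcases Nat.even_or_odd (tm n) with h | h
    · rw [h.neg_one_pow, h.neg_one_pow, zpow_one, one_mul, Real.exp_log hpos]
    · rw [h.neg_one_pow, h.neg_one_pow, zpow_neg_one, neg_one_mul, Real.exp_neg,
        Real.exp_log hpos]
  have hprod : ∀ N, ∏ n ∈ Finset.range N,
      ((2 * (n : ℝ) + 1) / (2 * (n : ℝ) + 2)) ^ ((-1 : ℤ) ^ tm n)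
      = Real.exp (WRaux.A N) := by
    intro N
    rw [WRaux.A, Real.exp_sum]
    exact Finset.prod_congr rfl fun n _ => factor_eq n
  have hlim : Real.exp (-(Real.log 2) / 2) = 1 / Real.sqrt 2 := by
    rw [neg_div, Real.exp_neg, one_div]
    congr 1
    rw [← Real.log_sqrt (by norm_num : (0:ℝ) ≤ 2),
      Real.exp_log (Real.sqrt_pos.mpr (by norm_num))]
  have := (Real.continuous_exp.tendsto _).comp WRaux.tendsto_A
  rw [hlim] at this
  apply this.congr
  intro N
  exact (hprod N).symm
end

section
/- For all a, b complex numbers not equal to a negative integer, f(a,b) = g(a)/g(b), where f(a,b) := ∏_{n≥1} ((n+a)/(n+b))^{(-1)^{t_n}} and g(x) := f(x/2, (x+1)/2)/(x+1). -/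
open Filter Finset Topology

/-- Partial products of `f(a,b) = ∏_{n ≥ 1} ((n+a)/(n+b))^{(-1)^{t_n}}`. -/
noncomputable def fPartial (a b : ℂ) (N : ℕ) : ℂ :=
  ∏ n ∈ Finset.range N,
    ((((n : ℂ) + 1) + a) / (((n : ℂ) + 1) + b)) ^ ((-1 : ℤ) ^ tm (n + 1))

namespace TMAux

def E (n : ℕ) : ℤ := (-1) ^ tm n

lemma neg_one_pow_mod (s : ℕ) : ((-1 : ℤ)) ^ (s % 2) = (-1) ^ s := by
  conv_rhs => rw [← Nat.div_add_mod s 2]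
  rw [pow_add, pow_mul]
  norm_num

lemma E_eq (n : ℕ) : E n = (-1) ^ ((Nat.digits 2 n).sum) := by
  simp only [E, tm, neg_one_pow_mod]

lemma E_even (m : ℕ) : E (2*m+2) = E (m+1) := by
  rw [E_eq, E_eq]
  rw [show 2*m+2 = 2*(m+1) from by ring, Nat.digits_def' (by norm_num : 1 < 2) (by omega)]
  simp [Nat.mul_div_cancel_left, Nat.mul_mod_right]

lemma E_odd (m : ℕ) : E (2*m+3) = - E (m+1) := by
  rw [E_eq, E_eq]
  rw [show 2*m+3 = 2*(m+1)+1 from by ring, Nat.digits_def' (by norm_num : 1 < 2) (by omega)]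
  have h1 : (2*(m+1)+1) % 2 = 1 := by omega
  have h2 : (2*(m+1)+1) / 2 = m+1 := by omega
  rw [h1, h2]
  simp [pow_add, pow_succ]

lemma E_one : E 1 = -1 := by
  rw [E_eq]; norm_num

lemma E_cases (n : ℕ) : E n = 1 ∨ E n = -1 := by
  rcases Nat.even_or_odd (tm n) with h | h
  · left; exact h.neg_one_pow
  · right; exact h.neg_one_pow

noncomputable def T (a b : ℂ) (n : ℕ) : ℂ := (((n:ℂ) + a) / ((n:ℂ) + b)) ^ E n

lemma fPartial_eq (a b : ℂ) (N : ℕ) : fPartial a b N = ∏ n ∈ range N, T a b (n+1) := by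
  refine Finset.prod_congr rfl fun n _ => ?_
  unfold T E
  push_cast
  ring_nf

end TMAux
namespace TMAux

lemma fPartial_succ (x y : ℂ) (N : ℕ) :
    fPartial x y (N+1) = fPartial x y N * T x y (N+1) := by
  rw [fPartial_eq, Finset.prod_range_succ, ← fPartial_eq]

lemma T_mul_T (x y z : ℂ) (n : ℕ) (hy : (n:ℂ) + y ≠ 0) :
    T x y n * T y z n = T x z n := by
  unfold T
  rw [← mul_zpow]
  congr 1
  rw [div_mul_div_comm, mul_comm ((n:ℂ)+x), mul_div_mul_left _ _ hy]

lemma cocycle (x y z : ℂ) (N : ℕ) (hy : ∀ n : ℕ, ((n:ℂ) + 1 + y) ≠ 0) :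
    fPartial x y N * fPartial y z N = fPartial x z N := by
  rw [fPartial_eq, fPartial_eq, fPartial_eq, ← Finset.prod_mul_distrib]
  refine Finset.prod_congr rfl fun n _ => ?_
  apply T_mul_T
  have := hy n; push_cast; exact this

lemma T_ne_zero (x y : ℂ) (n : ℕ) (hx : (n:ℂ) + x ≠ 0) (hy : (n:ℂ) + y ≠ 0) :
    T x y n ≠ 0 := by
  unfold T
  exact zpow_ne_zero _ (div_ne_zero hx hy)

lemma fPartial_ne_zero (x y : ℂ) (N : ℕ) (hx : ∀ n : ℕ, ((n:ℂ) + 1 + x) ≠ 0)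
    (hy : ∀ n : ℕ, ((n:ℂ) + 1 + y) ≠ 0) : fPartial x y N ≠ 0 := by
  rw [fPartial_eq]
  refine Finset.prod_ne_zero_iff.mpr fun n _ => ?_
  apply T_ne_zero
  · have := hx n; push_cast; exact this
  · have := hy n; push_cast; exact this

/-- Key splitting identity. -/
lemma key (a b : ℂ) (N : ℕ) :
    fPartial a b (2*N+1) =
      (1+b)/(1+a) * fPartial (a/2) (b/2) N * (fPartial ((a+1)/2) ((b+1)/2) N)⁻¹ := by
  induction N with
  | zero =>
      simp only [Nat.mul_zero, Nat.zero_add, fPartial_eq, Finset.range_one, Finset.range_zero,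
        Finset.prod_empty, Finset.prod_singleton, mul_one, inv_one]
      show T a b 1 = _
      unfold T
      rw [E_one]
      push_cast
      rw [zpow_neg, zpow_one, inv_div]
  | succ N ih =>
      have h1 : 2*(N+1)+1 = (2*N+1+1) + 1 := by ring
      rw [h1, fPartial_succ, show (2*N+1+1)+1 = 2*N+3 from by omega,
          show 2*N+1+1 = 2*N+2 from by omega, fPartial_succ, show 2*N+1+1 = 2*N+2 from by omega,
          ih, fPartial_succ (a/2), fPartial_succ ((a+1)/2)]
      have hev : T a b (2*N+2) = T (a/2) (b/2) (N+1) := by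
        unfold T
        rw [E_even]
        congr 1
        push_cast
        rw [show ((2:ℂ)*(N:ℂ)+2+a) = 2*((N:ℂ)+1+a/2) from by ring,
            show ((2:ℂ)*(N:ℂ)+2+b) = 2*((N:ℂ)+1+b/2) from by ring,
            mul_div_mul_left _ _ (two_ne_zero)]
      have hodd : T a b (2*N+3) = (T ((a+1)/2) ((b+1)/2) (N+1))⁻¹ := by
        unfold T
        rw [E_odd, zpow_neg]
        congr 2
        push_cast
        rw [show ((2:ℂ)*(N:ℂ)+3+a) = 2*((N:ℂ)+1+(a+1)/2) from by ring,
            show ((2:ℂ)*(N:ℂ)+3+b) = 2*((N:ℂ)+1+(b+1)/2) from by ring,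
            mul_div_mul_left _ _ (two_ne_zero)]
      rw [hev, hodd, mul_inv]
      ring

end TMAux
namespace TMAux

section NZ
variable {b : ℂ} (hb : ∀ k : ℕ, b ≠ -((k : ℂ) + 1))
include hb

lemma nz_half (n : ℕ) : ((n:ℂ) + 1 + b/2) ≠ 0 := by
  intro h
  apply hb (2*n+1)
  push_cast
  linear_combination 2*h

lemma nz_half' (n : ℕ) : ((n:ℂ) + 1 + (b+1)/2) ≠ 0 := by
  intro h
  apply hb (2*n+2)
  push_cast
  linear_combination 2*h

lemma nz_one : (1 : ℂ) + b ≠ 0 := by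
  intro h
  apply hb 0
  push_cast
  linear_combination h
end NZ

lemma star (a b : ℂ) (ha : ∀ k : ℕ, a ≠ -((k : ℂ) + 1)) (hb : ∀ k : ℕ, b ≠ -((k : ℂ) + 1))
    (N : ℕ) :
    fPartial a b (2*N+1) * fPartial (b/2) ((b+1)/2) N * (1+a) =
      fPartial (a/2) ((a+1)/2) N * (1+b) := by
  rw [key]
  have c1 : fPartial (a/2) (b/2) N * fPartial (b/2) ((b+1)/2) N
      = fPartial (a/2) ((b+1)/2) N := cocycle _ _ _ _ (nz_half hb)
  have c2 : fPartial (a/2) ((a+1)/2) N * fPartial ((a+1)/2) ((b+1)/2) N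
      = fPartial (a/2) ((b+1)/2) N := cocycle _ _ _ _ (nz_half' ha)
  have hq : fPartial ((a+1)/2) ((b+1)/2) N ≠ 0 :=
    fPartial_ne_zero _ _ _ (nz_half' ha) (nz_half' hb)
  have ha0 : (1:ℂ) + a ≠ 0 := nz_one ha
  field_simp
  linear_combination (b+1)*c1 - (b+1)*c2
end TMAux
namespace TMAux

lemma limit_eq (a b : ℂ) (ha : ∀ k : ℕ, a ≠ -((k : ℂ) + 1)) (hb : ∀ k : ℕ, b ≠ -((k : ℂ) + 1))
    (Fab Fa Fb : ℂ)
    (hFab : Tendsto (fPartial a b) atTop (𝓝 Fab))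
    (hFa : Tendsto (fPartial (a / 2) ((a + 1) / 2)) atTop (𝓝 Fa))
    (hFb : Tendsto (fPartial (b / 2) ((b + 1) / 2)) atTop (𝓝 Fb)) :
    Fab * Fb * (1+a) = Fa * (1+b) := by
  have hodd : Tendsto (fun N : ℕ => 2*N+1) atTop atTop :=
    tendsto_atTop_mono (fun n => by simp only [id_eq]; omega) tendsto_id
  have h2 : Tendsto (fun N => fPartial a b (2*N+1)) atTop (𝓝 Fab) := hFab.comp hodd
  have hL : Tendsto (fun N => fPartial a b (2*N+1) * fPartial (b/2) ((b+1)/2) N * (1+a))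
      atTop (𝓝 (Fab * Fb * (1+a))) := (h2.mul hFb).mul tendsto_const_nhds
  have hR : Tendsto (fun N => fPartial (a/2) ((a+1)/2) N * (1+b)) atTop (𝓝 (Fa * (1+b))) :=
    hFa.mul tendsto_const_nhds
  exact tendsto_nhds_unique (hL.congr (fun N => star a b ha hb N)) hR

end TMAux
namespace TMAux

noncomputable def vv (x y : ℂ) (m : ℕ) : ℂ :=
  ((2*(m:ℂ)+2+x)*(2*(m:ℂ)+3+y)) / ((2*(m:ℂ)+2+y)*(2*(m:ℂ)+3+x))

lemma pairT (x y : ℂ) (m : ℕ) :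
    T x y (2*m+2) * T x y (2*m+3) = vv x y m ^ E (m+1) := by
  unfold T vv
  rw [E_even, E_odd, zpow_neg, ← div_eq_mul_inv, ← div_zpow]
  congr 1
  rw [div_eq_mul_inv, inv_div, div_mul_div_comm]
  push_cast
  ring

lemma group (x y : ℂ) (N : ℕ) :
    fPartial x y (2*N+2) =
      T x y 1 * (∏ m ∈ range N, vv x y m ^ E (m+1)) * T x y (2*N+2) := by
  induction N with
  | zero =>
      rw [show 2*0+2 = 2 from rfl, fPartial_eq]
      rw [Finset.prod_range_succ, Finset.prod_range_one]
      simp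
  | succ N ih =>
      rw [show 2*(N+1)+2 = (2*N+3)+1 from by omega, fPartial_succ,
          show (2*N+3) = (2*N+2)+1 from by omega, fPartial_succ,
          show (2*N+2)+1 = 2*N+3 from by omega, show (2*N+3)+1 = 2*(N+1)+2 from by omega,
          ih, Finset.prod_range_succ, ← pairT]
      ring

end TMAux
namespace TMAux

lemma Fb_ne (b : ℂ) (hb : ∀ k : ℕ, b ≠ -((k : ℂ) + 1)) (Fb : ℂ)
    (hFb : Tendsto (fPartial (b / 2) ((b + 1) / 2)) atTop (𝓝 Fb)) : Fb ≠ 0 := by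
  -- nonvanishing facts
  have A1 : ∀ m : ℕ, (2*(m:ℂ)+2+b/2) ≠ 0 :=
    fun m h => nz_half hb (2*m+1) (by push_cast at h ⊢; linear_combination h)
  have A2 : ∀ m : ℕ, (2*(m:ℂ)+3+b/2) ≠ 0 :=
    fun m h => nz_half hb (2*m+2) (by push_cast at h ⊢; linear_combination h)
  have B1 : ∀ m : ℕ, (2*(m:ℂ)+2+(b+1)/2) ≠ 0 :=
    fun m h => nz_half' hb (2*m+1) (by push_cast at h ⊢; linear_combination h)
  have B2 : ∀ m : ℕ, (2*(m:ℂ)+3+(b+1)/2) ≠ 0 :=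
    fun m h => nz_half' hb (2*m+2) (by push_cast at h ⊢; linear_combination h)
  have hvne : ∀ m : ℕ, vv (b/2) ((b+1)/2) m ≠ 0 := fun m =>
    div_ne_zero (mul_ne_zero (A1 m) (B2 m)) (mul_ne_zero (B1 m) (A2 m))
  -- difference formula
  have hdiff : ∀ m : ℕ, vv (b/2) ((b+1)/2) m - 1
      = (-1/2) / ((2*(m:ℂ)+2+(b+1)/2)*(2*(m:ℂ)+3+b/2)) := by
    intro m
    unfold vv
    rw [div_sub_one (mul_ne_zero (B1 m) (A2 m)), div_eq_div_iff (mul_ne_zero (B1 m) (A2 m))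
      (mul_ne_zero (B1 m) (A2 m))]
    ring
  have hnd : ∀ m : ℕ, ‖vv (b/2) ((b+1)/2) m - 1‖
      = (1/2) / (‖2*(m:ℂ)+2+(b+1)/2‖ * ‖2*(m:ℂ)+3+b/2‖) := by
    intro m
    rw [hdiff m, norm_div, norm_mul]
    norm_num
  -- choose M
  obtain ⟨M, hM⟩ := exists_nat_ge (‖(b:ℂ)/2‖ + ‖((b:ℂ)+1)/2‖ + 1)
  have hxM : ‖(b:ℂ)/2‖ ≤ M := by
    have := norm_nonneg (((b:ℂ)+1)/2); linarith
  have hyM : ‖((b:ℂ)+1)/2‖ ≤ M := by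
    have := norm_nonneg ((b:ℂ)/2); linarith
  -- norm lower bounds for shifted indices
  have hlow : ∀ (c : ℂ) (t : ℝ) (m : ℕ), ‖c‖ ≤ M → (2:ℝ) ≤ t → t ≤ 3 →
      ((m:ℝ)+M+1) ≤ ‖2*((m+M:ℕ):ℂ)+t+c‖ := by
    intro c t m hc h2 h3
    have hn : ‖(2*((m+M:ℕ):ℂ)+t)‖ = 2*((m:ℝ)+M)+t := by
      rw [show (2*((m+M:ℕ):ℂ)+t) = (((2*((m:ℝ)+M)+t) : ℝ) : ℂ) from by push_cast; ring]
      rw [Complex.norm_real, Real.norm_eq_abs, abs_of_nonneg (by positivity)]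
    have key := norm_sub_norm_le (2*((m+M:ℕ):ℂ)+t) (-c)
    rw [sub_neg_eq_add, norm_neg, hn] at key
    push_cast at key ⊢
    linarith
  -- bound on log norms
  have hlog : ∀ m : ℕ, ‖Complex.log (vv (b/2) ((b+1)/2) (m+M))‖ ≤ 1/((m:ℝ)+1)^2 := by
    intro m
    have l1 := hlow ((b+1)/2) 2 m hyM (by norm_num) (by norm_num)
    have l2 := hlow (b/2) 3 m hxM (by norm_num) (by norm_num)
    have hpos : (0:ℝ) < (m:ℝ)+M+1 := by positivity
    have hprod : ((m:ℝ)+1)^2 ≤ ‖2*((m+M:ℕ):ℂ)+2+((b:ℂ)+1)/2‖ * ‖2*((m+M:ℕ):ℂ)+3+(b:ℂ)/2‖ := by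
      have h1 : ((m:ℝ)+1) ≤ ‖2*((m+M:ℕ):ℂ)+2+((b:ℂ)+1)/2‖ := by
        refine le_trans ?_ l1; push_cast; linarith [Nat.cast_nonneg (α := ℝ) M]
      have h2 : ((m:ℝ)+1) ≤ ‖2*((m+M:ℕ):ℂ)+3+(b:ℂ)/2‖ := by
        refine le_trans ?_ l2; push_cast; linarith [Nat.cast_nonneg (α := ℝ) M]
      have hm1 : (0:ℝ) ≤ (m:ℝ)+1 := by positivity
      calc ((m:ℝ)+1)^2 = ((m:ℝ)+1)*((m:ℝ)+1) := sq ((m:ℝ)+1) ▸ by ring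
        _ ≤ _ := mul_le_mul h1 h2 hm1 (le_trans hm1 h1)
    have hnd' : ‖vv (b/2) ((b+1)/2) (m+M) - 1‖ ≤ (1/2) / ((m:ℝ)+1)^2 := by
      rw [hnd (m+M)]
      push_cast
      apply div_le_div_of_nonneg_left (by norm_num) (by positivity)
      calc ((m:ℝ)+1)^2 ≤ _ := hprod
        _ = _ := by push_cast; ring
    have hhalf : ‖vv (b/2) ((b+1)/2) (m+M) - 1‖ ≤ 1/2 := by
      refine le_trans hnd' ?_
      rw [div_le_div_iff₀ (by positivity) (by norm_num)]
      nlinarith [Nat.cast_nonneg (α := ℝ) m]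
    have := Complex.norm_log_one_add_half_le_self hhalf
    rw [show (1 : ℂ) + (vv (b/2) ((b+1)/2) (m+M) - 1) = vv (b/2) ((b+1)/2) (m+M) from by ring]
      at this
    refine le_trans this ?_
    have hq : (0:ℝ) ≤ 1/((m:ℝ)+1)^2 := by positivity
    calc 3/2*‖vv (b/2) ((b+1)/2) (m+M) - 1‖ ≤ 3/2*(1/2/((m:ℝ)+1)^2) := by linarith
      _ = 3/4*(1/((m:ℝ)+1)^2) := by ring
      _ ≤ 1*(1/((m:ℝ)+1)^2) := mul_le_mul_of_nonneg_right (by norm_num) hq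
      _ = 1/((m:ℝ)+1)^2 := one_mul _
  -- summability of the log series
  have hgsum : Summable (fun m : ℕ => 1/((m:ℝ)+1)^2) := by
    have h0 : Summable (fun n : ℕ => 1/(n:ℝ)^2) := Real.summable_one_div_nat_pow.mpr one_lt_two
    have := (summable_nat_add_iff 1).mpr h0
    exact this.congr (fun m => by push_cast; ring)
  have hSlog : Summable (fun m : ℕ => ‖Complex.log (vv (b/2) ((b+1)/2) (m+M))‖) :=
    Summable.of_nonneg_of_le (fun m => norm_nonneg _) hlog hgsum
  have hSlog' : Summable (fun m : ℕ => ‖Complex.log (vv (b/2) ((b+1)/2) m)‖) :=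
    (summable_nat_add_iff M).mp hSlog
  set w : ℕ → ℂ := fun m => (E (m+1) : ℂ) * Complex.log (vv (b/2) ((b+1)/2) m) with hw_def
  have hwnorm : ∀ m, ‖w m‖ = ‖Complex.log (vv (b/2) ((b+1)/2) m)‖ := by
    intro m
    rcases E_cases (m+1) with h | h <;> simp [hw_def, h, norm_mul]
  have hw : Summable w := Summable.of_norm (hSlog'.congr (fun m => (hwnorm m).symm))
  have hVW : ∀ m, vv (b/2) ((b+1)/2) m ^ E (m+1) = Complex.exp (w m) := by
    intro m
    rcases E_cases (m+1) with h | h <;> rw [hw_def] <;> simp only [h]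
    · rw [zpow_one]
      push_cast
      rw [one_mul, Complex.exp_log (hvne m)]
    · rw [zpow_neg_one]
      push_cast
      rw [neg_one_mul, Complex.exp_neg, Complex.exp_log (hvne m)]
  have hprod_eq : ∀ N, (∏ m ∈ range N, vv (b/2) ((b+1)/2) m ^ E (m+1))
      = Complex.exp (∑ m ∈ range N, w m) := by
    intro N
    rw [Complex.exp_sum]
    exact Finset.prod_congr rfl (fun m _ => hVW m)
  have hsum_t : Tendsto (fun N => ∑ m ∈ range N, w m) atTop (𝓝 (∑' m, w m)) :=
    hw.hasSum.tendsto_sum_nat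
  have hprod_t : Tendsto (fun N => ∏ m ∈ range N, vv (b/2) ((b+1)/2) m ^ E (m+1)) atTop
      (𝓝 (Complex.exp (∑' m, w m))) := by
    refine Tendsto.congr (fun N => (hprod_eq N).symm) ?_
    exact (Complex.continuous_exp.tendsto _).comp hsum_t
  -- the tail term tends to 1
  set rr : ℕ → ℂ := fun N => (((2*N+2:ℕ):ℂ)+b/2)/(((2*N+2:ℕ):ℂ)+(b+1)/2) with hrr_def
  have hden_ne : ∀ N : ℕ, (((2*N+2:ℕ):ℂ)+(b+1)/2) ≠ 0 := by
    intro N h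
    exact B1 N (by push_cast at h ⊢; linear_combination h)
  have hd0 : Tendsto (fun N : ℕ => (((2*N+2:ℕ):ℂ)+(b+1)/2)⁻¹) atTop (𝓝 0) := by
    apply squeeze_zero_norm' (a := fun N : ℕ => 1/((N:ℝ)+1))
    · filter_upwards [eventually_ge_atTop M] with N hN
      rw [norm_inv]
      have hlb : ((N:ℝ)+1) ≤ ‖((2*N+2:ℕ):ℂ)+(b+1)/2‖ := by
        have key := norm_sub_norm_le (((2*N+2:ℕ):ℂ)) (-((b+1)/2))
        rw [sub_neg_eq_add, norm_neg] at key
        have hn : ‖((2*N+2:ℕ):ℂ)‖ = 2*(N:ℝ)+2 := by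
          rw [show (((2*N+2:ℕ):ℂ)) = (((2*(N:ℝ)+2) : ℝ) : ℂ) from by push_cast; ring]
          rw [Complex.norm_real, Real.norm_eq_abs, abs_of_nonneg (by positivity)]
        rw [hn] at key
        have hNM : (M:ℝ) ≤ N := by exact_mod_cast hN
        linarith
      rw [one_div]
      exact inv_anti₀ (by positivity) hlb
    · exact tendsto_one_div_add_atTop_nhds_zero_nat
  have hrr_eq : ∀ N : ℕ, rr N = 1 + (-1/2) * (((2*N+2:ℕ):ℂ)+(b+1)/2)⁻¹ := by
    intro N
    rw [hrr_def]
    simp only []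
    rw [div_eq_iff (hden_ne N), add_mul, one_mul, mul_assoc, inv_mul_cancel₀ (hden_ne N)]
    ring
  have hr1 : Tendsto rr atTop (𝓝 1) := by
    have h2 : Tendsto (fun N : ℕ => (1:ℂ) + (-1/2) * ((((2*N+2:ℕ):ℂ)+(b+1)/2)⁻¹)) atTop
        (𝓝 ((1:ℂ) + (-1/2) * 0)) := tendsto_const_nhds.add (tendsto_const_nhds.mul hd0)
    rw [show (1:ℂ) + (-1/2)*0 = 1 from by ring] at h2
    exact h2.congr (fun N => (hrr_eq N).symm)
  have hr2 : Tendsto (fun N => (rr N)⁻¹) atTop (𝓝 1) := by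
    simpa using hr1.inv₀ one_ne_zero
  have hTbound : ∀ N : ℕ, ‖T (b/2) ((b+1)/2) (2*N+2) - 1‖ ≤ ‖rr N - 1‖ + ‖(rr N)⁻¹ - 1‖ := by
    intro N
    have hT_cases : T (b/2) ((b+1)/2) (2*N+2) = rr N ∨ T (b/2) ((b+1)/2) (2*N+2) = (rr N)⁻¹ := by
      unfold T
      rcases E_cases (2*N+2) with h | h <;> rw [h]
      · left; rw [zpow_one]
      · right; rw [zpow_neg_one]
    rcases hT_cases with h | h <;> rw [h]
    · exact le_add_of_nonneg_right (norm_nonneg _)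
    · exact le_add_of_nonneg_left (norm_nonneg _)
  have hg0 : Tendsto (fun N => ‖rr N - 1‖ + ‖(rr N)⁻¹ - 1‖) atTop (𝓝 0) := by
    have := ((hr1.sub_const 1).norm).add ((hr2.sub_const 1).norm)
    simpa using this
  have hT2 : Tendsto (fun N => T (b/2) ((b+1)/2) (2*N+2)) atTop (𝓝 1) := by
    have h0 : Tendsto (fun N => T (b/2) ((b+1)/2) (2*N+2) - 1) atTop (𝓝 0) :=
      squeeze_zero_norm hTbound hg0
    have := h0.add (tendsto_const_nhds (x := (1:ℂ)))
    simpa using this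
  -- assembly
  have heven : Tendsto (fun N : ℕ => 2*N+2) atTop atTop :=
    tendsto_atTop_mono (fun n => by simp only [id_eq]; omega) tendsto_id
  have hsub : Tendsto (fun N => fPartial (b/2) ((b+1)/2) (2*N+2)) atTop (𝓝 Fb) :=
    hFb.comp heven
  have hmain : Tendsto (fun N => fPartial (b/2) ((b+1)/2) (2*N+2)) atTop
      (𝓝 (T (b/2) ((b+1)/2) 1 * Complex.exp (∑' m, w m) * 1)) :=
    (((tendsto_const_nhds (x := T (b/2) ((b+1)/2) 1)).mul hprod_t).mul hT2).congr
      (fun N => (group (b/2) ((b+1)/2) N).symm)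
  have hFb_eq : Fb = T (b/2) ((b+1)/2) 1 * Complex.exp (∑' m, w m) * 1 :=
    tendsto_nhds_unique hsub hmain
  have hT1 : T (b/2) ((b+1)/2) 1 ≠ 0 := by
    apply T_ne_zero
    · intro h
      exact nz_half hb 0 (by push_cast at h ⊢; linear_combination h)
    · intro h
      exact nz_half' hb 0 (by push_cast at h ⊢; linear_combination h)
  rw [hFb_eq]
  exact mul_ne_zero (mul_ne_zero hT1 (Complex.exp_ne_zero _)) one_ne_zero

end TMAux

theorem f_eq_g_div_g (a b : ℂ)
    (ha : ∀ k : ℕ, a ≠ -((k : ℂ) + 1)) (hb : ∀ k : ℕ, b ≠ -((k : ℂ) + 1))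
    (Fab Fa Fb : ℂ)
    (hFab : Tendsto (fPartial a b) atTop (𝓝 Fab))
    (hFa : Tendsto (fPartial (a / 2) ((a + 1) / 2)) atTop (𝓝 Fa))
    (hFb : Tendsto (fPartial (b / 2) ((b + 1) / 2)) atTop (𝓝 Fb)) :
    Fab = (Fa / (a + 1)) / (Fb / (b + 1)) := by
  have h := TMAux.limit_eq a b ha hb Fab Fa Fb hFab hFa hFb
  have hFbne := TMAux.Fb_ne b hb Fb hFb
  have ha0 : (1:ℂ) + a ≠ 0 := TMAux.nz_one ha
  have hb0 : (1:ℂ) + b ≠ 0 := TMAux.nz_one hb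
  have ha0' : a + 1 ≠ 0 := by rwa [add_comm] at ha0
  have hb0' : b + 1 ≠ 0 := by rwa [add_comm] at hb0
  field_simp
  linear_combination h
end

section
/- The function g(x) := f(x/2,(x+1)/2)/(x+1), where f(a,b) := ∏_{n≥1} ((n+a)/(n+b))^{(-1)^{t_n}}, satisfies the functional equation (1+x)·g(x) = g(x/2)/g((x+1)/2) for all complex x not equal to a negative integer. -/
open Filter Finset Topology

lemma tm_le_one (n : ℕ) : tm n ≤ 1 := Nat.lt_succ_iff.mp (Nat.mod_lt _ (by norm_num))

lemma tm_even (n : ℕ) : tm (2*n+2) = tm (n+1) := by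
  unfold tm
  rw [Nat.digits_def' (by norm_num : (1:ℕ) < 2) (by omega)]
  have h1 : (2*n+2) % 2 = 0 := by omega
  have h2 : (2*n+2) / 2 = n+1 := by omega
  rw [h1, h2]; simp

lemma tm_odd (n : ℕ) : tm (2*n+3) = (tm (n+1) + 1) % 2 := by
  unfold tm
  rw [Nat.digits_def' (by norm_num : (1:ℕ) < 2) (by omega)]
  have h1 : (2*n+3) % 2 = 1 := by omega
  have h2 : (2*n+3) / 2 = n+1 := by omega
  rw [h1, h2]; simp [List.sum_cons, Nat.add_mod, Nat.add_comm]

lemma e_odd (n : ℕ) : ((-1:ℤ))^tm (2*n+3) = -((-1)^tm (n+1)) := by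
  rw [tm_odd]
  have := tm_le_one (n+1)
  interval_cases h : tm (n+1) <;> norm_num

lemma tm_one : tm 1 = 1 := by simp [tm]

lemma fPartial_succ (a b : ℂ) (M : ℕ) :
    fPartial a b (M+1) = fPartial a b M *
      ((((M : ℂ) + 1) + a) / (((M : ℂ) + 1) + b)) ^ ((-1 : ℤ) ^ tm (M + 1)) :=
  Finset.prod_range_succ _ _

lemma key_identity (x : ℂ) (hX : ∀ m : ℕ, x + ((m:ℂ)+1) ≠ 0) (N : ℕ) :
    fPartial (x/2) ((x+1)/2) (2*N+1) *
      (fPartial (((x+1)/2)/2) ((((x+1)/2)+1)/2) N * (x/2+1))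
    = fPartial ((x/2)/2) (((x/2)+1)/2) N * ((x+1)/2+1) := by
  induction N with
  | zero =>
    have h1 : (0:ℂ) + 1 + x/2 ≠ 0 := fun h => hX 1 (by push_cast; linear_combination 2*h)
    rw [show 2*0+1 = 1 from rfl]
    simp only [fPartial, Finset.prod_range_one, Finset.prod_range_zero,
      Nat.zero_add, tm_one, pow_one, zpow_neg, zpow_one, Nat.cast_zero, one_mul, mul_one]
    rw [inv_div, div_mul_eq_mul_div, div_eq_iff h1]
    ring
  | succ N IH =>
    have hr : 2*(N+1)+1 = (2*N+1)+1+1 := by ring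
    rw [hr, fPartial_succ (x/2) ((x+1)/2) (2*N+1+1), fPartial_succ (x/2) ((x+1)/2) (2*N+1),
      fPartial_succ (((x+1)/2)/2) ((((x+1)/2)+1)/2) N, fPartial_succ ((x/2)/2) (((x/2)+1)/2) N]
    have ht1 : tm ((2*N+1)+1) = tm (N+1) := tm_even N
    have ht2 : ((-1:ℤ))^tm ((2*N+1)+1+1) = -((-1)^tm (N+1)) := e_odd N
    rw [ht1, ht2]
    set e : ℤ := (-1)^tm (N+1) with he
    have hstep :
        ((((2*N+1:ℕ):ℂ) + 1 + x/2) / (((2*N+1:ℕ):ℂ) + 1 + (x+1)/2)) ^ e *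
        ((((2*N+1+1:ℕ):ℂ) + 1 + x/2) / (((2*N+1+1:ℕ):ℂ) + 1 + (x+1)/2)) ^ (-e) *
        ((((N:ℕ):ℂ) + 1 + ((x+1)/2)/2) / (((N:ℕ):ℂ) + 1 + (((x+1)/2)+1)/2)) ^ e
        = ((((N:ℕ):ℂ) + 1 + ((x/2))/2) / (((N:ℕ):ℂ) + 1 + (((x/2))+1)/2)) ^ e := by
      rw [zpow_neg, ← inv_zpow, ← mul_zpow, ← mul_zpow]
      congr 1
      push_cast
      have m2 : 2*(N:ℂ)+1+1 + (x+1)/2 ≠ 0 := fun h => hX (4*N+4) (by push_cast; linear_combination 2*h)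
      have m3 : 2*(N:ℂ)+1+1+1 + x/2 ≠ 0 := fun h => hX (4*N+5) (by push_cast; linear_combination 2*h)
      have m6 : (N:ℂ)+1 + (((x+1)/2)+1)/2 ≠ 0 := fun h => hX (4*N+6) (by push_cast; linear_combination 4*h)
      have m7 : (N:ℂ)+1 + ((x/2)+1)/2 ≠ 0 := fun h => hX (4*N+5) (by push_cast; linear_combination 4*h)
      rw [inv_div, div_mul_div_comm, div_mul_div_comm,
        div_eq_div_iff (by exact mul_ne_zero (mul_ne_zero m2 m3) m6) m7]
      ring
    calc fPartial (x/2) ((x+1)/2) (2*N+1) *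
          ((((2*N+1:ℕ):ℂ) + 1 + x/2) / (((2*N+1:ℕ):ℂ) + 1 + (x+1)/2)) ^ e *
          ((((2*N+1+1:ℕ):ℂ) + 1 + x/2) / (((2*N+1+1:ℕ):ℂ) + 1 + (x+1)/2)) ^ (-e) *
          (fPartial (((x+1)/2)/2) ((((x+1)/2)+1)/2) N *
            ((((N:ℕ):ℂ) + 1 + ((x+1)/2)/2) / (((N:ℕ):ℂ) + 1 + (((x+1)/2)+1)/2)) ^ e * (x/2+1))
        = (fPartial (x/2) ((x+1)/2) (2*N+1) *
            (fPartial (((x+1)/2)/2) ((((x+1)/2)+1)/2) N * (x/2+1))) *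
          (((((2*N+1:ℕ):ℂ) + 1 + x/2) / (((2*N+1:ℕ):ℂ) + 1 + (x+1)/2)) ^ e *
           ((((2*N+1+1:ℕ):ℂ) + 1 + x/2) / (((2*N+1+1:ℕ):ℂ) + 1 + (x+1)/2)) ^ (-e) *
           ((((N:ℕ):ℂ) + 1 + ((x+1)/2)/2) / (((N:ℕ):ℂ) + 1 + (((x+1)/2)+1)/2)) ^ e) := by ring
      _ = (fPartial ((x/2)/2) (((x/2)+1)/2) N * ((x+1)/2+1)) *
          ((((N:ℕ):ℂ) + 1 + ((x/2))/2) / (((N:ℕ):ℂ) + 1 + (((x/2))+1)/2)) ^ e := by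
            rw [IH, hstep]
      _ = fPartial ((x/2)/2) (((x/2)+1)/2) N *
          ((((N:ℕ):ℂ) + 1 + (x/2)/2) / (((N:ℕ):ℂ) + 1 + ((x/2)+1)/2)) ^ e * ((x+1)/2+1) := by
            ring

lemma norm_zpow_pm (w : ℂ) (s : ℝ) (hw : ‖w - 1‖ ≤ s) (hs : s ≤ 1/2) (e : ℤ)
    (he : e = 1 ∨ e = -1) : 1 - s ≤ ‖w ^ e‖ := by
  have h1 : 1 - s ≤ ‖w‖ := by
    have tri : ‖(1:ℂ)‖ ≤ ‖w‖ + ‖w - 1‖ := by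
      simpa [norm_sub_rev] using norm_add_le w (1 - w)
    simp only [norm_one] at tri
    linarith
  have h2 : ‖w‖ ≤ 1 + s := by
    have tri : ‖w‖ ≤ ‖(1:ℂ)‖ + ‖w - 1‖ := by
      simpa [add_comm] using norm_add_le (1:ℂ) (w - 1)
    simp only [norm_one] at tri
    linarith
  have hwpos : (0:ℝ) < ‖w‖ := by linarith
  rcases he with rfl | rfl
  · rw [zpow_one]; exact h1
  · rw [show (-1:ℤ) = -(1:ℤ) from rfl, zpow_neg, zpow_one, norm_inv]
    rw [inv_eq_one_div, le_div_iff₀ hwpos]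
    nlinarith

set_option maxHeartbeats 1000000 in
lemma fPartial_lim_ne_zero (c d : ℂ) (hcd : d - c = 1/2)
    (hc : ∀ n : ℕ, (n:ℂ)+1+c ≠ 0) (hd : ∀ n : ℕ, (n:ℂ)+1+d ≠ 0)
    (L : ℂ) (hL : Tendsto (fPartial c d) atTop (𝓝 L)) : L ≠ 0 := by
  obtain ⟨M, hM⟩ := exists_nat_ge (‖c‖ + ‖d‖)
  have hPne : ∀ N, fPartial c d N ≠ 0 := fun N =>
    Finset.prod_ne_zero_iff.mpr fun n _ => zpow_ne_zero _ (div_ne_zero (hc n) (hd n))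
  set c0 := ‖fPartial c d (2*M+1)‖ with hc0def
  have hc0 : 0 < c0 := norm_pos_iff.mpr (hPne _)
  have hrec : ∀ N : ℕ, M ≤ N →
      ‖fPartial c d (2*N+1)‖ * (1 - (1/2)/(((N:ℝ)+1)*((N:ℝ)+2)))
        ≤ ‖fPartial c d (2*(N+1)+1)‖ := by
    intro N hN
    set s : ℝ := (1/2)/(((N:ℝ)+1)*((N:ℝ)+2)) with hsdef
    set e : ℤ := (-1)^tm (N+1) with hedef
    set w : ℂ := ((2*(N:ℂ)+1+1+c)/(2*(N:ℂ)+1+1+d)) *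
      ((2*(N:ℂ)+1+1+1+c)/(2*(N:ℂ)+1+1+1+d))⁻¹ with hwdef
    have expand : fPartial c d (2*(N+1)+1) = fPartial c d (2*N+1) * w ^ e := by
      rw [show 2*(N+1)+1 = 2*N+1+1+1 from by ring,
        fPartial_succ c d (2*N+1+1), fPartial_succ c d (2*N+1),
        show tm (2*N+1+1) = tm (N+1) from tm_even N,
        show ((-1:ℤ))^tm (2*N+1+1+1) = -((-1)^tm (N+1)) from e_odd N]
      push_cast
      rw [zpow_neg, ← inv_zpow, mul_assoc, ← mul_zpow, ← hedef, ← hwdef]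
    have hq : (2*(N:ℂ)+1+1+d) ≠ 0 := fun h => hd (2*N+1) (by push_cast; linear_combination h)
    have hr : (2*(N:ℂ)+1+1+1+c) ≠ 0 := fun h => hc (2*N+2) (by push_cast; linear_combination h)
    have hw1 : w - 1 = (c - d) / ((2*(N:ℂ)+1+1+d) * (2*(N:ℂ)+1+1+1+c)) := by
      rw [hwdef, inv_div, div_mul_div_comm, div_sub_one (mul_ne_zero hq hr)]
      congr 1
      ring
    have hNd : ‖d‖ ≤ (N:ℝ) := by
      have : (M:ℝ) ≤ (N:ℝ) := Nat.cast_le.mpr hN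
      have := norm_nonneg c
      linarith
    have hNc : ‖c‖ ≤ (N:ℝ) := by
      have : (M:ℝ) ≤ (N:ℝ) := Nat.cast_le.mpr hN
      have := norm_nonneg d
      linarith
    have hqn : (N:ℝ)+1 ≤ ‖2*(N:ℂ)+1+1+d‖ := by
      have tri : ‖(2*(N:ℂ)+1+1)‖ ≤ ‖2*(N:ℂ)+1+1+d‖ + ‖d‖ := by
        simpa using norm_add_le (2*(N:ℂ)+1+1+d) (-d)
      have hn2 : ‖(2*(N:ℂ)+1+1)‖ = 2*(N:ℝ)+2 := by
        rw [show (2*(N:ℂ)+1+1) = ((2*N+2 : ℕ) : ℂ) from by push_cast; ring,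
          Complex.norm_natCast]
        push_cast; ring
      rw [hn2] at tri
      linarith
    have hrn : (N:ℝ)+2 ≤ ‖2*(N:ℂ)+1+1+1+c‖ := by
      have tri : ‖(2*(N:ℂ)+1+1+1)‖ ≤ ‖2*(N:ℂ)+1+1+1+c‖ + ‖c‖ := by
        simpa using norm_add_le (2*(N:ℂ)+1+1+1+c) (-c)
      have hn2 : ‖(2*(N:ℂ)+1+1+1)‖ = 2*(N:ℝ)+3 := by
        rw [show (2*(N:ℂ)+1+1+1) = ((2*N+3 : ℕ) : ℂ) from by push_cast; ring,
          Complex.norm_natCast]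
        push_cast; ring
      rw [hn2] at tri
      linarith
    have hcd2 : ‖c - d‖ = 1/2 := by
      rw [show c - d = -(1/2 : ℂ) from by linear_combination -hcd, norm_neg]
      norm_num
    have hNpos : (0:ℝ) < (N:ℝ)+1 := by positivity
    have hNpos2 : (0:ℝ) < (N:ℝ)+2 := by positivity
    have hw2 : ‖w - 1‖ ≤ s := by
      rw [hw1, norm_div, norm_mul, hcd2, hsdef]
      gcongr
    have hs12 : s ≤ 1/2 := by
      rw [hsdef]
      rw [div_le_div_iff₀ (by positivity) (by norm_num)]
      nlinarith [Nat.cast_nonneg (α := ℝ) N]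
    have he : e = 1 ∨ e = -1 := by
      have := tm_le_one (N+1)
      interval_cases h : tm (N+1)
      · left; simp [hedef, h]
      · right; simp [hedef, h]
    have hwe : 1 - s ≤ ‖w ^ e‖ := norm_zpow_pm w s hw2 hs12 e he
    rw [expand, norm_mul]
    exact mul_le_mul_of_nonneg_left hwe (norm_nonneg _)
  have main : ∀ k : ℕ,
      c0 * (1 - (1/2) * (1/((M:ℝ)+1) - 1/((M:ℝ)+(k:ℝ)+1))) ≤ ‖fPartial c d (2*(M+k)+1)‖ := by
    intro k
    induction k with
    | zero =>
      simp only [Nat.cast_zero, add_zero, Nat.add_zero, sub_self, mul_zero, sub_zero, mul_one]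
      exact le_of_eq hc0def
    | succ k ih =>
      have hMN : ((M+k:ℕ):ℝ) = (M:ℝ)+(k:ℝ) := by push_cast; ring
      have h1 := hrec (M+k) (Nat.le_add_right M k)
      rw [hMN] at h1
      set u := (M:ℝ) with hu
      set v := (k:ℝ) with hv
      have hupos : 0 ≤ u := Nat.cast_nonneg M
      have hvpos : 0 ≤ v := Nat.cast_nonneg k
      have hA : 0 ≤ (1/2) * (1/(u+1) - 1/(u+v+1)) := by
        have h2 : 1/(u+v+1) ≤ 1/(u+1) :=
          one_div_le_one_div_of_le (by linarith) (by linarith)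
        linarith
      have hsge : 0 ≤ (1/2)/((u+v+1)*(u+v+2)) := by positivity
      have keyeq : (1/2) * (1/(u+1) - 1/(u+v+1+1))
          = (1/2) * (1/(u+1) - 1/(u+v+1)) + (1/2)/((u+v+1)*(u+v+2)) := by
        have d1 : (u+1) ≠ 0 := by positivity
        have d2 : (u+v+1) ≠ 0 := by positivity
        have d3 : (u+v+2) ≠ 0 := by positivity
        have d4 : (u+v+1+1) ≠ 0 := by positivity
        field_simp
        ring
      have step1 : c0 * (1 - (1/2) * (1/(u+1) - 1/(u+v+1+1)))
          ≤ (c0 * (1 - (1/2) * (1/(u+1) - 1/(u+v+1)))) * (1 - (1/2)/((u+v+1)*(u+v+2))) := by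
        rw [keyeq]
        nlinarith [mul_nonneg (mul_nonneg hc0.le hA) hsge]
      have step2 : (c0 * (1 - (1/2) * (1/(u+1) - 1/(u+v+1)))) * (1 - (1/2)/((u+v+1)*(u+v+2)))
          ≤ ‖fPartial c d (2*(M+k)+1)‖ * (1 - (1/2)/((u+v+1)*(u+v+2))) :=
        mul_le_mul_of_nonneg_right ih (by
          have : (1/2)/((u+v+1)*(u+v+2)) ≤ 1/2 := by
            rw [div_le_div_iff₀ (by nlinarith) (by norm_num)]
            nlinarith
          linarith)
      have hcast : ((M:ℝ)+((k+1:ℕ):ℝ)+1) = u+v+1+1 := by push_cast; ring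
      rw [hcast]
      calc c0 * (1 - (1/2) * (1/(u+1) - 1/(u+v+1+1)))
          ≤ ‖fPartial c d (2*(M+k)+1)‖ * (1 - (1/2)/((u+v+1)*(u+v+2))) := le_trans step1 step2
        _ ≤ ‖fPartial c d (2*(M+k+1)+1)‖ := h1
  have hbound : ∀ᶠ N in atTop, c0/2 ≤ ‖fPartial c d (2*N+1)‖ := by
    rw [eventually_atTop]
    refine ⟨M, fun N hN => ?_⟩
    obtain ⟨k, rfl⟩ := Nat.exists_eq_add_of_le hN
    refine le_trans ?_ (main k)
    have hupos : (0:ℝ) ≤ (M:ℝ) := Nat.cast_nonneg M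
    have hvpos : (0:ℝ) ≤ (k:ℝ) := Nat.cast_nonneg k
    have h1 : 1/((M:ℝ)+(k:ℝ)+1) ≥ 0 := by positivity
    have h2 : 1/((M:ℝ)+1) ≤ 1 := by
      rw [div_le_one (by linarith)]; linarith
    have hA2 : (1/2) * (1/((M:ℝ)+1) - 1/((M:ℝ)+(k:ℝ)+1)) ≤ 1/2 := by linarith
    nlinarith [mul_le_mul_of_nonneg_left hA2 hc0.le]
  have hlim2 : Tendsto (fun N => ‖fPartial c d (2*N+1)‖) atTop (𝓝 ‖L‖) := by
    exact (hL.comp (tendsto_atTop_atTop.mpr fun b => ⟨b, fun a ha => by omega⟩)).norm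
  have hfinal : c0/2 ≤ ‖L‖ := ge_of_tendsto hlim2 hbound
  intro h
  rw [h, norm_zero] at hfinal
  linarith

/-- Functional equation `(1+x) g(x) = g(x/2) / g((x+1)/2)` where
`g(x) = f(x/2, (x+1)/2) / (x+1)`. -/
theorem g_functional_equation (x : ℂ)
    (hx : ∀ k : ℕ, x ≠ -((k : ℂ) + 1))
    (Gx Gx2 Gx12 : ℂ)
    (hGx : Tendsto (fPartial (x / 2) ((x + 1) / 2)) atTop (𝓝 Gx))
    (hGx2 : Tendsto (fPartial ((x / 2) / 2) (((x / 2) + 1) / 2)) atTop (𝓝 Gx2))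
    (hGx12 : Tendsto (fPartial (((x + 1) / 2) / 2) ((((x + 1) / 2) + 1) / 2)) atTop (𝓝 Gx12)) :
    (1 + x) * (Gx / (x + 1)) =
      (Gx2 / (x / 2 + 1)) / (Gx12 / ((x + 1) / 2 + 1)) := by
  have hX : ∀ m : ℕ, x + ((m:ℂ)+1) ≠ 0 := fun m h => hx m (by linear_combination h)
  have hcd : (((x+1)/2+1)/2) - (((x+1)/2)/2) = 1/2 := by ring
  have hc : ∀ n : ℕ, (n:ℂ)+1+(((x+1)/2)/2) ≠ 0 :=
    fun n h => hX (4*n+4) (by push_cast; linear_combination 4*h)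
  have hd : ∀ n : ℕ, (n:ℂ)+1+(((x+1)/2+1)/2) ≠ 0 :=
    fun n h => hX (4*n+6) (by push_cast; linear_combination 4*h)
  have hG12ne : Gx12 ≠ 0 := fPartial_lim_ne_zero _ _ hcd hc hd Gx12 hGx12
  have htop : Tendsto (fun N : ℕ => 2*N+1) atTop atTop :=
    tendsto_atTop_atTop.mpr fun b => ⟨b, fun a ha => by omega⟩
  have hL1 : Tendsto (fun N => fPartial (x/2) ((x+1)/2) (2*N+1) *
      (fPartial (((x+1)/2)/2) ((((x+1)/2)+1)/2) N * (x/2+1))) atTop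
      (𝓝 (Gx * (Gx12 * (x/2+1)))) :=
    (hGx.comp htop).mul (hGx12.mul_const _)
  have hL2 : Tendsto (fun N => fPartial ((x/2)/2) (((x/2)+1)/2) N * ((x+1)/2+1)) atTop
      (𝓝 (Gx2 * ((x+1)/2+1))) := hGx2.mul_const _
  have heq : Gx * (Gx12 * (x/2+1)) = Gx2 * ((x+1)/2+1) :=
    tendsto_nhds_unique (hL1.congr (fun N => key_identity x hX N)) hL2
  have h0 : x + 1 ≠ 0 := fun h => hX 0 (by push_cast; linear_combination h)
  have h1 : x/2 + 1 ≠ 0 := fun h => hX 1 (by push_cast; linear_combination 2*h)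
  have h2 : (x+1)/2 + 1 ≠ 0 := fun h => hX 2 (by push_cast; linear_combination 2*h)
  have e1 : (1 + x) * (Gx / (x + 1)) = Gx := by
    rw [mul_div_assoc', mul_comm, mul_div_assoc, show (1+x) = (x+1) from by ring,
      div_self h0, mul_one]
  rw [e1, div_div_eq_mul_div, eq_div_iff hG12ne, div_mul_eq_mul_div, eq_div_iff h1]
  linear_combination heq
end

section
/- With g(x) := f(x/2,(x+1)/2)/(x+1) and f(a,b) := ∏_{n≥1} ((n+a)/(n+b))^{(-1)^{t_n}}, one has g(1/2) = 1 and g(1) = √2/2. -/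
open Filter Finset Topology

def e (n : ℕ) : ℤ := (-1) ^ tm n

lemma neg_one_pow_mod (m : ℕ) : ((-1:ℤ))^(m % 2) = (-1)^m := by
  conv_rhs => rw [← Nat.div_add_mod m 2, pow_add, pow_mul]
  norm_num

lemma e_eq (n : ℕ) : e n = (-1:ℤ) ^ (Nat.digits 2 n).sum := by
  rw [e, tm, neg_one_pow_mod]

lemma e_one_or (n : ℕ) : e n = 1 ∨ e n = -1 := by
  rw [e_eq]
  rcases Nat.even_or_odd ((Nat.digits 2 n).sum) with h | h
  · left; exact Even.neg_one_pow h
  · right; exact Odd.neg_one_pow h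

lemma e_two_mul (k : ℕ) : e (2*k) = e k := by
  rcases Nat.eq_zero_or_pos k with rfl | hk
  · norm_num
  · rw [e_eq, e_eq, Nat.digits_def' (by norm_num : 1 < 2) (by omega)]
    simp [Nat.mul_div_cancel_left, Nat.mul_mod_right]

lemma e_two_mul_add_one (k : ℕ) : e (2*k+1) = - e k := by
  rw [e_eq, e_eq, Nat.digits_def' (by norm_num : 1 < 2) (by omega)]
  have h1 : (2*k+1) % 2 = 1 := by omega
  have h2 : (2*k+1) / 2 = k := by omega
  rw [h1, h2]
  simp [List.sum_cons, pow_add, pow_succ]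

lemma e_zero : e 0 = 1 := by simp [e, tm]
lemma e_one : e 1 = -1 := by
  have := e_two_mul_add_one 0; rw [e_zero] at this; simpa using this

noncomputable def P (N : ℕ) : ℝ := ∏ n ∈ range N, ((2*(n:ℝ)+3)/(2*(n:ℝ)+4)) ^ e (n+1)
noncomputable def S (N : ℕ) : ℝ := ∏ n ∈ range N, ((4*(n:ℝ)+5)/(4*(n:ℝ)+7)) ^ e (n+1)
noncomputable def Q (N : ℕ) : ℝ := ∏ n ∈ range N, (((n:ℝ)+1)/((n:ℝ)+2)) ^ e (n+1)
noncomputable def R (N : ℕ) : ℝ := ∏ n ∈ range N, (1 - 1/(2*(n:ℝ)+3)^2) ^ e (n+1)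

lemma P_succ (N : ℕ) : P (N+1) = P N * ((2*(N:ℝ)+3)/(2*(N:ℝ)+4)) ^ e (N+1) := by
  simp [P, prod_range_succ]
lemma S_succ (N : ℕ) : S (N+1) = S N * ((4*(N:ℝ)+5)/(4*(N:ℝ)+7)) ^ e (N+1) := by
  simp [S, prod_range_succ]
lemma Q_succ (N : ℕ) : Q (N+1) = Q N * (((N:ℝ)+1)/((N:ℝ)+2)) ^ e (N+1) := by
  simp [Q, prod_range_succ]
lemma R_succ (N : ℕ) : R (N+1) = R N * (1 - 1/(2*(N:ℝ)+3)^2) ^ e (N+1) := by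
  simp [R, prod_range_succ]

lemma P_pos (N : ℕ) : 0 < P N := by
  apply Finset.prod_pos; intro n _; apply zpow_pos; positivity
lemma Q_pos (N : ℕ) : 0 < Q N := by
  apply Finset.prod_pos; intro n _; apply zpow_pos; positivity

lemma zpow_combine3 (x : ℤ) (a b c d : ℝ) (h : a * b⁻¹ * c = d) :
    a^x * b^(-x) * c^x = d^x := by
  rw [← h, mul_zpow, mul_zpow, zpow_neg, inv_zpow]
lemma zpow_combine2 (x : ℤ) (a b d : ℝ) (h : a * b⁻¹ = d) :
    a^x * b^(-x) = d^x := by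
  rw [← h, mul_zpow, zpow_neg, inv_zpow]
lemma zpow_combine3' (x : ℤ) (a b c d : ℝ) (h : a * b⁻¹ * (c*c) = d) :
    a^x * b^(-x) * (c^x * c^x) = d^x := by
  rw [← h, mul_zpow, mul_zpow, mul_zpow, zpow_neg, inv_zpow]

-- Identity I : P (2N+1) * (3 * P N) = 4 * S N
lemma identity_I (N : ℕ) : P (2*N+1) * (3 * P N) = 4 * S N := by
  induction N with
  | zero =>
    have h0 : P 0 = 1 := by simp [P]
    have hS : S 0 = 1 := by simp [S]
    have h1 : P 1 = 4/3 := by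
      rw [P_succ, h0, e_one]; norm_num
    rw [h1, h0, hS]; norm_num
  | succ N ih =>
    have he1 : e (2*N+1+1) = e (N+1) := by rw [show 2*N+1+1 = 2*(N+1) by ring, e_two_mul]
    have he2 : e (2*N+1+1+1) = - e (N+1) := by rw [show 2*N+1+1+1 = 2*(N+1)+1 by ring, e_two_mul_add_one]
    have key : ((2*((2*N:ℝ)+1)+3)/(2*((2*N:ℝ)+1)+4))^(e (N+1)) *
        ((2*((2*N:ℝ)+2)+3)/(2*((2*N:ℝ)+2)+4))^(-e (N+1)) *
        ((2*(N:ℝ)+3)/(2*(N:ℝ)+4))^(e (N+1)) = ((4*(N:ℝ)+5)/(4*(N:ℝ)+7))^(e (N+1)) := by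
      apply zpow_combine3
      have d1 : (2*((2*N:ℝ)+1)+4) ≠ 0 := by positivity
      have d2 : (2*((2*N:ℝ)+2)+3) ≠ 0 := by positivity
      have d3 : (2*((2*N:ℝ)+2)+4) ≠ 0 := by positivity
      have d4 : (2*(N:ℝ)+4) ≠ 0 := by positivity
      have d5 : (4*(N:ℝ)+7) ≠ 0 := by positivity
      field_simp
      try ring
    calc P (2*(N+1)+1) * (3 * P (N+1))
        = (P (2*N+1) * (3 * P N)) *
          (((2*((2*N:ℝ)+1)+3)/(2*((2*N:ℝ)+1)+4))^(e (N+1)) *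
           ((2*((2*N:ℝ)+2)+3)/(2*((2*N:ℝ)+2)+4))^(-e (N+1)) *
           ((2*(N:ℝ)+3)/(2*(N:ℝ)+4))^(e (N+1))) := by
          rw [show 2*(N+1)+1 = (2*N+1)+1+1 by ring, P_succ ((2*N+1)+1), P_succ (2*N+1),
              P_succ N, he1, he2]
          push_cast
          ring
      _ = 4 * S N * ((4*(N:ℝ)+5)/(4*(N:ℝ)+7))^(e (N+1)) := by rw [ih, key]
      _ = 4 * S (N+1) := by rw [S_succ]; ring

-- Identity II : Q (2N+1) = 2 * R N
lemma identity_II (N : ℕ) : Q (2*N+1) = 2 * R N := by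
  induction N with
  | zero =>
    have h0 : Q 0 = 1 := by simp [Q]
    have hR : R 0 = 1 := by simp [R]
    have h1 : Q 1 = 2 := by rw [Q_succ, h0, e_one]; norm_num
    rw [h1, hR]; norm_num
  | succ N ih =>
    have he1 : e (2*N+1+1) = e (N+1) := by rw [show 2*N+1+1 = 2*(N+1) by ring, e_two_mul]
    have he2 : e (2*N+1+1+1) = - e (N+1) := by rw [show 2*N+1+1+1 = 2*(N+1)+1 by ring, e_two_mul_add_one]
    have key : (((2*N:ℝ)+1+1)/((2*N:ℝ)+1+2))^(e (N+1)) *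
        (((2*N:ℝ)+2+1)/((2*N:ℝ)+2+2))^(-e (N+1)) = (1 - 1/(2*(N:ℝ)+3)^2)^(e (N+1)) := by
      apply zpow_combine2
      have d1 : ((2*N:ℝ)+1+2) ≠ 0 := by positivity
      have d2 : ((2*N:ℝ)+2+1) ≠ 0 := by positivity
      have d3 : ((2*N:ℝ)+2+2) ≠ 0 := by positivity
      have d4 : (2*(N:ℝ)+3) ≠ 0 := by positivity
      field_simp
      try ring
    calc Q (2*(N+1)+1)
        = Q (2*N+1) * ((((2*N:ℝ)+1+1)/((2*N:ℝ)+1+2))^(e (N+1)) *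
            (((2*N:ℝ)+2+1)/((2*N:ℝ)+2+2))^(-e (N+1))) := by
          rw [show 2*(N+1)+1 = (2*N+1)+1+1 by ring, Q_succ ((2*N+1)+1), Q_succ (2*N+1),
              he1, he2]
          push_cast
          ring
      _ = 2 * R N * (1 - 1/(2*(N:ℝ)+3)^2)^(e (N+1)) := by rw [ih, ← key]
      _ = 2 * R (N+1) := by rw [R_succ]; ring

-- Identity III : Q (2N+1) * (P N)^2 = 2 * Q N
lemma identity_III (N : ℕ) : Q (2*N+1) * (P N)^2 = 2 * Q N := by
  induction N with
  | zero =>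
    have h0 : Q 0 = 1 := by simp [Q]
    have hP : P 0 = 1 := by simp [P]
    have h1 : Q 1 = 2 := by rw [Q_succ, h0, e_one]; norm_num
    rw [h1, h0, hP]; norm_num
  | succ N ih =>
    have he1 : e (2*N+1+1) = e (N+1) := by rw [show 2*N+1+1 = 2*(N+1) by ring, e_two_mul]
    have he2 : e (2*N+1+1+1) = - e (N+1) := by rw [show 2*N+1+1+1 = 2*(N+1)+1 by ring, e_two_mul_add_one]
    have key : (((2*N:ℝ)+1+1)/((2*N:ℝ)+1+2))^(e (N+1)) *
        (((2*N:ℝ)+2+1)/((2*N:ℝ)+2+2))^(-e (N+1)) *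
        (((2*(N:ℝ)+3)/(2*(N:ℝ)+4))^(e (N+1)) * ((2*(N:ℝ)+3)/(2*(N:ℝ)+4))^(e (N+1))) =
        (((N:ℝ)+1)/((N:ℝ)+2))^(e (N+1)) := by
      apply zpow_combine3'
      have d1 : ((2*N:ℝ)+1+2) ≠ 0 := by positivity
      have d2 : ((2*N:ℝ)+2+1) ≠ 0 := by positivity
      have d3 : ((2*N:ℝ)+2+2) ≠ 0 := by positivity
      have d4 : (2*(N:ℝ)+4) ≠ 0 := by positivity
      have d5 : ((N:ℝ)+2) ≠ 0 := by positivity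
      field_simp
      try ring
    calc Q (2*(N+1)+1) * (P (N+1))^2
        = (Q (2*N+1) * (P N)^2) * ((((2*N:ℝ)+1+1)/((2*N:ℝ)+1+2))^(e (N+1)) *
            (((2*N:ℝ)+2+1)/((2*N:ℝ)+2+2))^(-e (N+1)) *
            (((2*(N:ℝ)+3)/(2*(N:ℝ)+4))^(e (N+1)) * ((2*(N:ℝ)+3)/(2*(N:ℝ)+4))^(e (N+1)))) := by
          rw [show 2*(N+1)+1 = (2*N+1)+1+1 by ring, Q_succ ((2*N+1)+1), Q_succ (2*N+1),
              P_succ N, he1, he2]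
          push_cast
          ring
      _ = 2 * Q N * (((N:ℝ)+1)/((N:ℝ)+2))^(e (N+1)) := by rw [ih, key]
      _ = 2 * Q (N+1) := by rw [Q_succ]; ring

lemma base_R_pos (n : ℕ) : (0:ℝ) < 1 - 1/(2*(n:ℝ)+3)^2 := by
  have h1 : (1:ℝ) < (2*(n:ℝ)+3)^2 := by nlinarith [Nat.cast_nonneg (α := ℝ) n]
  have h2 : (0:ℝ) < (2*(n:ℝ)+3)^2 := by positivity
  rw [sub_pos, div_lt_one h2]; linarith

noncomputable def u (n : ℕ) : ℝ := (e (n+1) : ℝ) * Real.log (1 - 1/(2*(n:ℝ)+3)^2)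

lemma abs_log_le (n : ℕ) : |Real.log (1 - 1/(2*(n:ℝ)+3)^2)| ≤ 2 * (1/(2*(n:ℝ)+3)^2) := by
  set x : ℝ := 1/(2*(n:ℝ)+3)^2 with hx
  have hx0 : 0 < x := by positivity
  have hx2 : x ≤ 1/2 := by
    rw [hx, div_le_div_iff₀ (by positivity) (by norm_num)]
    nlinarith [Nat.cast_nonneg (α := ℝ) n]
  have hpos : (0:ℝ) < 1 - x := base_R_pos n
  have hlogneg : Real.log (1 - x) ≤ 0 := Real.log_nonpos (by linarith) (by linarith)
  have hlb : -(2*x) ≤ Real.log (1 - x) := by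
    have h1 : Real.log (1-x)⁻¹ ≤ (1-x)⁻¹ - 1 := Real.log_le_sub_one_of_pos (by positivity)
    rw [Real.log_inv] at h1
    have h2 : (1-x)⁻¹ - 1 = x/(1-x) := by field_simp; ring
    have h3 : x/(1-x) ≤ 2*x := by
      rw [div_le_iff₀ hpos]; nlinarith
    linarith
  rw [abs_le]; constructor <;> [linarith; linarith]

lemma abs_u_le (n : ℕ) : |u n| ≤ 1/((n:ℝ)+1)^2 := by
  have he : |(e (n+1) : ℝ)| = 1 := by
    rcases e_one_or (n+1) with h | h <;> simp [h]
  have h1 : |u n| = |Real.log (1 - 1/(2*(n:ℝ)+3)^2)| := by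
    rw [u, abs_mul, he, one_mul]
  rw [h1]
  refine (abs_log_le n).trans ?_
  rw [show (2:ℝ) * (1/(2*(n:ℝ)+3)^2) = 2/(2*(n:ℝ)+3)^2 by ring,
     div_le_div_iff₀ (by positivity) (by positivity)]
  nlinarith [Nat.cast_nonneg (α := ℝ) n]

lemma summable_u : Summable u := by
  have h1 : Summable (fun n : ℕ => 1/((n:ℝ)+1)^2) := by
    have := Real.summable_one_div_nat_pow.2 (by norm_num : 1 < 2)
    have h2 := (summable_nat_add_iff 1).2 this
    simpa using h2
  exact (Summable.of_nonneg_of_le (fun n => abs_nonneg _) abs_u_le h1).of_abs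

lemma R_eq_exp (N : ℕ) : R N = Real.exp (∑ n ∈ range N, u n) := by
  rw [Real.exp_sum, R]
  refine Finset.prod_congr rfl fun n _ => ?_
  rw [u, ← Real.log_zpow, Real.exp_log (zpow_pos (base_R_pos n) _)]

lemma R_tendsto : ∃ L : ℝ, 0 < L ∧ Tendsto R atTop (𝓝 L) := by
  obtain ⟨s, hs⟩ := summable_u
  refine ⟨Real.exp s, Real.exp_pos s, ?_⟩
  have h1 : Tendsto (fun N => ∑ n ∈ range N, u n) atTop (𝓝 s) := hs.tendsto_sum_nat
  have h2 := (Real.continuous_exp.tendsto s).comp h1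
  have h3 : (Real.exp ∘ fun N => ∑ n ∈ range N, u n) = R := by
    funext N; simp [Function.comp, R_eq_exp]
  rwa [h3] at h2

lemma fPartial_B (N : ℕ) : fPartial ((1 : ℂ) / 2) (((1 : ℂ) + 1) / 2) N = ((P N : ℝ) : ℂ) := by
  rw [fPartial, P, Complex.ofReal_prod]
  refine Finset.prod_congr rfl fun n _ => ?_
  rw [Complex.ofReal_zpow]
  have hbase : (((n : ℂ) + 1) + (1:ℂ)/2) / (((n : ℂ) + 1) + ((1:ℂ)+1)/2)
      = (((2*(n:ℝ)+3)/(2*(n:ℝ)+4) : ℝ) : ℂ) := by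
    have hd : ((n : ℂ) + 1) + ((1:ℂ)+1)/2 ≠ 0 := by
      have : ((n : ℂ) + 1) + ((1:ℂ)+1)/2 = ((n+2 : ℕ) : ℂ) := by push_cast; ring
      rw [this]
      exact Nat.cast_ne_zero.2 (by omega)
    have hd2 : ((2*(n:ℝ)+4 : ℝ) : ℂ) ≠ 0 := by
      rw [Complex.ofReal_ne_zero]; positivity
    push_cast
    rw [div_eq_div_iff hd (by push_cast at hd2 ⊢; exact hd2)]
    ring
  rw [hbase, e]
lemma fPartial_A (N : ℕ) : fPartial ((1/2 : ℂ) / 2) (((1/2 : ℂ) + 1) / 2) N = ((S N : ℝ) : ℂ) := by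
  rw [fPartial, S, Complex.ofReal_prod]
  refine Finset.prod_congr rfl fun n _ => ?_
  rw [Complex.ofReal_zpow]
  have hbase : (((n : ℂ) + 1) + ((1:ℂ)/2)/2) / (((n : ℂ) + 1) + ((1:ℂ)/2+1)/2)
      = (((4*(n:ℝ)+5)/(4*(n:ℝ)+7) : ℝ) : ℂ) := by
    have hd : ((n : ℂ) + 1) + ((1:ℂ)/2+1)/2 ≠ 0 := by
      intro h
      have h2 : (4:ℂ) * (((n : ℂ) + 1) + ((1:ℂ)/2+1)/2) = ((4*n+7 : ℕ) : ℂ) := by push_cast; ring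
      rw [h, mul_zero] at h2
      exact (Nat.cast_ne_zero.2 (by omega : 4*n+7 ≠ 0)) h2.symm
    have hd2 : ((4*(n:ℝ)+7 : ℝ) : ℂ) ≠ 0 := by
      rw [Complex.ofReal_ne_zero]; positivity
    push_cast
    rw [div_eq_div_iff hd (by push_cast at hd2 ⊢; exact hd2)]
    ring
  rw [hbase, e]

/-- `g(1/2) = 1` and `g(1) = √2/2`, where `g(x) = f(x/2,(x+1)/2)/(x+1)`. -/
theorem g_half_and_g_one (A B : ℂ)
    (hA : Tendsto (fPartial ((1 / 2 : ℂ) / 2) (((1 / 2 : ℂ) + 1) / 2)) atTop (𝓝 A))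
    (hB : Tendsto (fPartial ((1 : ℂ) / 2) (((1 : ℂ) + 1) / 2)) atTop (𝓝 B)) :
    A / ((1 / 2 : ℂ) + 1) = 1 ∧ B / ((1 : ℂ) + 1) = (Real.sqrt 2 : ℂ) / 2 := by
  have hBc : Tendsto (fun N => ((P N : ℝ) : ℂ)) atTop (𝓝 B) := by
    have h : (fPartial ((1 : ℂ) / 2) (((1 : ℂ) + 1) / 2)) = fun N => ((P N : ℝ) : ℂ) :=
      funext fPartial_B
    rwa [h] at hB
  have hAc : Tendsto (fun N => ((S N : ℝ) : ℂ)) atTop (𝓝 A) := by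
    have h : (fPartial ((1 / 2 : ℂ) / 2) (((1 / 2 : ℂ) + 1) / 2)) = fun N => ((S N : ℝ) : ℂ) :=
      funext fPartial_A
    rwa [h] at hA
  have hPre : Tendsto P atTop (𝓝 B.re) := by
    have h := (Complex.continuous_re.tendsto B).comp hBc
    simpa [Function.comp_def] using h
  have hBim : B.im = 0 := by
    have h1 := (Complex.continuous_im.tendsto B).comp hBc
    have h2 : (Complex.im ∘ fun N => ((P N : ℝ) : ℂ)) = fun _ => (0:ℝ) := by
      funext N; simp [Function.comp]
    rw [h2] at h1
    exact (tendsto_nhds_unique h1 tendsto_const_nhds)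
  have hSre : Tendsto S atTop (𝓝 A.re) := by
    have h := (Complex.continuous_re.tendsto A).comp hAc
    simpa [Function.comp_def] using h
  have hAim : A.im = 0 := by
    have h1 := (Complex.continuous_im.tendsto A).comp hAc
    have h2 : (Complex.im ∘ fun N => ((S N : ℝ) : ℂ)) = fun _ => (0:ℝ) := by
      funext N; simp [Function.comp]
    rw [h2] at h1
    exact (tendsto_nhds_unique h1 tendsto_const_nhds)
  have hBre0 : 0 ≤ B.re :=
    le_of_tendsto_of_tendsto tendsto_const_nhds hPre
      (Filter.Eventually.of_forall fun N => (P_pos N).le)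
  have hsub : Tendsto (fun M : ℕ => 2*M+1) atTop atTop := by
    apply tendsto_atTop_mono _ tendsto_id
    intro n; simp only [id_eq]; omega
  have hP2 : Tendsto (fun M => P (2*M+1)) atTop (𝓝 B.re) := hPre.comp hsub
  obtain ⟨L, hL, hRt⟩ := R_tendsto
  have hQodd : Tendsto (fun N => Q (2*N+1)) atTop (𝓝 (2*L)) := by
    have h : (fun N => Q (2*N+1)) = fun N => 2 * R N := funext identity_II
    rw [h]; exact hRt.const_mul 2
  have hQ4 : Tendsto (fun M => Q (2*(2*M+1)+1)) atTop (𝓝 (2*L)) := hQodd.comp hsub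
  have hsq : B.re^2 = 2 := by
    have h1 : Tendsto (fun M => Q (2*(2*M+1)+1) * (P (2*M+1))^2) atTop
        (𝓝 ((2*L) * B.re^2)) := hQ4.mul (hP2.pow 2)
    have h2 : (fun M => Q (2*(2*M+1)+1) * (P (2*M+1))^2) = fun M => 2 * Q (2*M+1) :=
      funext fun M => identity_III (2*M+1)
    rw [h2] at h1
    have h3 : Tendsto (fun M => 2 * Q (2*M+1)) atTop (𝓝 (2*(2*L))) := hQodd.const_mul 2
    have h4 : (2*L) * B.re^2 = 2*(2*L) := tendsto_nhds_unique h1 h3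
    nlinarith [h4, hL]
  have hBre : B.re = Real.sqrt 2 := by
    rw [show (2:ℝ) = B.re^2 from hsq.symm, Real.sqrt_sq hBre0]
  have hAre : A.re = 3/2 := by
    have h1 : Tendsto (fun M => P (2*M+1) * (3 * P M)) atTop
        (𝓝 (B.re * (3 * B.re))) := hP2.mul (hPre.const_mul 3)
    have h2 : (fun M => P (2*M+1) * (3 * P M)) = fun M => 4 * S M := funext identity_I
    rw [h2] at h1
    have h3 : Tendsto (fun M => 4 * S M) atTop (𝓝 (4 * A.re)) := hSre.const_mul 4
    have h4 : B.re * (3 * B.re) = 4 * A.re := tendsto_nhds_unique h1 h3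
    nlinarith [h4, hsq]
  constructor
  · have hA32 : A = (3/2 : ℂ) := by
      apply Complex.ext
      · rw [hAre]; norm_num
      · rw [hAim]; norm_num
    rw [hA32]; norm_num
  · have hB2 : B = ((Real.sqrt 2 : ℝ) : ℂ) := by
      apply Complex.ext
      · rw [hBre]; simp
      · rw [hBim]; simp
    rw [hB2]
    ring
end

section
/- For all a, b ∈ ℂ \ {-1,-2,-3,...}, ∏_{n≥1} [((n+a)(2n+a+1)(2n+b)) / ((2n+a)(n+b)(2n+b+1))]^{(-1)^{t_n}} = (b+1)/(a+1). -/
open Filter Finset Topology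

lemma tm_zero_or_one (n : ℕ) : tm n = 0 ∨ tm n = 1 :=
  Nat.mod_two_eq_zero_or_one _

lemma tm_two_mul (n : ℕ) : tm (2 * n) = tm n := by
  rcases Nat.eq_zero_or_pos n with rfl | hn
  · rfl
  · unfold tm
    rw [Nat.digits_def' (by norm_num : 1 < 2) (by omega)]
    simp [Nat.mul_div_cancel_left _ (by norm_num : 0 < 2), Nat.mul_mod_right]

lemma tm_two_mul_add_one (n : ℕ) : tm (2 * n + 1) = (tm n + 1) % 2 := by
  unfold tm
  rw [Nat.digits_def' (by norm_num : 1 < 2) (by omega)]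
  have h1 : (2 * n + 1) % 2 = 1 := by omega
  have h2 : (2 * n + 1) / 2 = n := by omega
  rw [h1, h2]
  simp [List.sum_cons]
  omega

lemma eps_two_mul (n : ℕ) : ((-1 : ℤ)) ^ tm (2 * n) = (-1 : ℤ) ^ tm n := by
  rw [tm_two_mul]

lemma eps_two_mul_add_one (n : ℕ) : ((-1 : ℤ)) ^ tm (2 * n + 1) = -((-1 : ℤ) ^ tm n) := by
  rcases tm_zero_or_one n with h | h <;> rw [tm_two_mul_add_one, h] <;> norm_num

lemma nat_add_ne_zero {a : ℂ} (ha : ∀ k : ℕ, a ≠ -((k : ℂ) + 1)) {m : ℕ} (hm : 1 ≤ m) :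
    ((m : ℂ) + a) ≠ 0 := by
  obtain ⟨k, rfl⟩ : ∃ k, m = k + 1 := ⟨m - 1, by omega⟩
  intro h
  exact ha k (by push_cast at h ⊢; linear_combination h)

lemma le_norm_nat_add (c : ℂ) (m : ℕ) : (m : ℝ) - ‖c‖ ≤ ‖(m : ℂ) + c‖ := by
  have h := norm_add_le ((m : ℂ) + c) (-c)
  simp only [add_neg_cancel_right, norm_neg, Complex.norm_natCast] at h
  linarith

lemma pair_prod (g : ℕ → ℂ) (N : ℕ) :
    ∏ n ∈ range N, (g (2 * n) * g (2 * n + 1)) = ∏ j ∈ range (2 * N), g j := by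
  induction N with
  | zero => simp
  | succ N ih =>
    rw [prod_range_succ, ih, show 2 * (N + 1) = (2 * N + 1) + 1 by ring,
      prod_range_succ, prod_range_succ]
    ring

lemma succ_add_ne {a : ℂ} (ha : ∀ k : ℕ, a ≠ -((k : ℂ) + 1)) (k : ℕ) :
    ((k : ℂ) + 1 + a) ≠ 0 := fun h => ha k (by linear_combination h)

noncomputable def hG (a b : ℂ) (n : ℕ) : ℂ :=
  (((n : ℂ) + a) / ((n : ℂ) + b)) ^ ((-1 : ℤ) ^ tm n)

lemma hG_ne {a b : ℂ} (ha : ∀ k : ℕ, a ≠ -((k : ℂ) + 1))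
    (hb : ∀ k : ℕ, b ≠ -((k : ℂ) + 1)) {m : ℕ} (hm : 1 ≤ m) : hG a b m ≠ 0 :=
  zpow_ne_zero _ (div_ne_zero (nat_add_ne_zero ha hm) (nat_add_ne_zero hb hm))

lemma factor_eq {a b : ℂ} (ha : ∀ k : ℕ, a ≠ -((k : ℂ) + 1))
    (hb : ∀ k : ℕ, b ≠ -((k : ℂ) + 1)) (n : ℕ) :
    (((((n : ℂ) + 1) + a) * (2 * ((n : ℂ) + 1) + a + 1) * (2 * ((n : ℂ) + 1) + b)) /
          ((2 * ((n : ℂ) + 1) + a) * (((n : ℂ) + 1) + b) * (2 * ((n : ℂ) + 1) + b + 1)))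
          ^ ((-1 : ℤ) ^ tm (n + 1))
      = hG a b (n + 1) / (hG a b (2 * (n + 1)) * hG a b (2 * (n + 1) + 1)) := by
  have h1a := succ_add_ne ha n
  have h1b := succ_add_ne hb n
  have h2a := succ_add_ne ha (2 * n + 1)
  have h2b := succ_add_ne hb (2 * n + 1)
  have h3a := succ_add_ne ha (2 * n + 2)
  have h3b := succ_add_ne hb (2 * n + 2)
  push_cast at h2a h2b h3a h3b
  simp only [hG, tm_two_mul, tm_two_mul_add_one]
  push_cast
  rcases tm_zero_or_one (n + 1) with h | h <;> rw [h] <;> norm_num <;>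
    field_simp <;> ring

lemma key_identity_s7 {a b : ℂ} (ha : ∀ k : ℕ, a ≠ -((k : ℂ) + 1))
    (hb : ∀ k : ℕ, b ≠ -((k : ℂ) + 1)) (N : ℕ) :
    ∏ n ∈ range N,
        (((((n : ℂ) + 1) + a) * (2 * ((n : ℂ) + 1) + a + 1) * (2 * ((n : ℂ) + 1) + b)) /
          ((2 * ((n : ℂ) + 1) + a) * (((n : ℂ) + 1) + b) * (2 * ((n : ℂ) + 1) + b + 1)))
          ^ ((-1 : ℤ) ^ tm (n + 1))
      = hG a b 1 * ((∏ n ∈ range N, hG a b (n + 1)) /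
          (∏ n ∈ range (2 * N + 1), hG a b (n + 1))) := by
  rw [Finset.prod_congr rfl fun n _ => factor_eq ha hb n, prod_div_distrib]
  have hpair : ∏ n ∈ range N, (hG a b (2 * (n + 1)) * hG a b (2 * (n + 1) + 1))
      = ∏ j ∈ range (2 * N), hG a b (j + 2) := by
    rw [← pair_prod (fun j => hG a b (j + 2)) N]
    exact Finset.prod_congr rfl fun n _ => by ring_nf
  have hsplit : ∏ n ∈ range (2 * N + 1), hG a b (n + 1)
      = (∏ j ∈ range (2 * N), hG a b (j + 2)) * hG a b 1 := by
    rw [Finset.prod_range_succ']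
  have hD : (∏ j ∈ range (2 * N), hG a b (j + 2)) ≠ 0 :=
    prod_ne_zero_iff.mpr fun j _ => hG_ne ha hb (by omega)
  rw [hpair, hsplit]
  have h1 : hG a b 1 ≠ 0 := hG_ne ha hb le_rfl
  field_simp

lemma norm_u_sub_one {a b : ℂ} (ha : ∀ k : ℕ, a ≠ -((k : ℂ) + 1))
    (hb : ∀ k : ℕ, b ≠ -((k : ℂ) + 1)) {n : ℕ} (hn1 : 1 ≤ n)
    (hna : ‖a‖ ≤ n) (hnb : ‖b‖ ≤ n) :
    ‖hG a b (2 * n) * hG a b (2 * n + 1) - 1‖ ≤ ‖a - b‖ / (n : ℝ) ^ 2 := by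
  have hA := nat_add_ne_zero ha (show 1 ≤ 2 * n by omega)
  have hB := nat_add_ne_zero hb (show 1 ≤ 2 * n by omega)
  have hA1 := nat_add_ne_zero ha (show 1 ≤ 2 * n + 1 by omega)
  have hB1 := nat_add_ne_zero hb (show 1 ≤ 2 * n + 1 by omega)
  push_cast at hA hB hA1 hB1
  have hXa : (n : ℝ) ≤ ‖2 * (n : ℂ) + a‖ := by
    have := le_norm_nat_add a (2 * n); push_cast at this; linarith
  have hXb : (n : ℝ) ≤ ‖2 * (n : ℂ) + b‖ := by
    have := le_norm_nat_add b (2 * n); push_cast at this; linarith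
  have hYa : (n : ℝ) ≤ ‖2 * (n : ℂ) + 1 + a‖ := by
    have := le_norm_nat_add a (2 * n + 1); push_cast at this; linarith
  have hYb : (n : ℝ) ≤ ‖2 * (n : ℂ) + 1 + b‖ := by
    have := le_norm_nat_add b (2 * n + 1); push_cast at this; linarith
  have hnpos : (0 : ℝ) < n := by exact_mod_cast hn1
  have h2 : (0 : ℝ) < (n : ℝ) ^ 2 := pow_pos hnpos 2
  rcases tm_zero_or_one n with h | h
  · have he : hG a b (2 * n) * hG a b (2 * n + 1) - 1
        = (a - b) / ((2 * (n : ℂ) + b) * (2 * (n : ℂ) + 1 + a)) := by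
      simp only [hG, tm_two_mul, tm_two_mul_add_one, h]
      push_cast
      norm_num
      field_simp
      ring
    rw [he, norm_div, norm_mul]
    have hle : (n : ℝ) ^ 2 ≤ ‖2 * (n : ℂ) + b‖ * ‖2 * (n : ℂ) + 1 + a‖ := by
      rw [sq]; exact mul_le_mul hXb hYa hnpos.le (norm_nonneg _)
    gcongr
  · have he : hG a b (2 * n) * hG a b (2 * n + 1) - 1
        = (b - a) / ((2 * (n : ℂ) + a) * (2 * (n : ℂ) + 1 + b)) := by
      simp only [hG, tm_two_mul, tm_two_mul_add_one, h]
      push_cast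
      norm_num
      field_simp
      ring
    rw [he, norm_div, norm_mul, norm_sub_rev]
    have hle : (n : ℝ) ^ 2 ≤ ‖2 * (n : ℂ) + a‖ * ‖2 * (n : ℂ) + 1 + b‖ := by
      rw [sq]; exact mul_le_mul hXa hYb hnpos.le (norm_nonneg _)
    gcongr

lemma summable_log_u {a b : ℂ} (ha : ∀ k : ℕ, a ≠ -((k : ℂ) + 1))
    (hb : ∀ k : ℕ, b ≠ -((k : ℂ) + 1)) :
    Summable fun k : ℕ =>
      Complex.log (hG a b (2 * (k + 1)) * hG a b (2 * (k + 1) + 1)) := by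
  have hs0 : Summable fun n : ℕ => 1 / (n : ℝ) ^ 2 :=
    Real.summable_one_div_nat_pow.mpr one_lt_two
  have hs1 : Summable fun k : ℕ => 3 / 2 * ‖a - b‖ * (1 / ((k : ℝ) + 1) ^ 2) := by
    apply Summable.mul_left
    have := (summable_nat_add_iff 1).mpr hs0
    refine this.congr fun k => ?_
    push_cast
    ring
  refine Summable.of_norm_bounded_eventually hs1 ?_
  rw [Nat.cofinite_eq_atTop]
  filter_upwards [eventually_ge_atTop (⌈‖a‖ + ‖b‖ + 2 * ‖a - b‖⌉₊ + 1)] with k hk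
  have hceil : (⌈‖a‖ + ‖b‖ + 2 * ‖a - b‖⌉₊ : ℝ) ≥ ‖a‖ + ‖b‖ + 2 * ‖a - b‖ :=
    Nat.le_ceil _
  have hk' : (‖a‖ + ‖b‖ + 2 * ‖a - b‖) + 1 ≤ (k : ℝ) + 1 := by
    have : (⌈‖a‖ + ‖b‖ + 2 * ‖a - b‖⌉₊ + 1 : ℝ) ≤ (k : ℝ) := by exact_mod_cast hk
    linarith
  have h0a : (0 : ℝ) ≤ ‖a‖ := norm_nonneg _
  have h0b : (0 : ℝ) ≤ ‖b‖ := norm_nonneg _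
  have h0ab : (0 : ℝ) ≤ ‖a - b‖ := norm_nonneg _
  set n : ℕ := k + 1 with hn
  have hn1 : 1 ≤ n := by omega
  have hnr : (‖a‖ + ‖b‖ + 2 * ‖a - b‖) + 1 ≤ (n : ℝ) := by push_cast [hn]; linarith
  have hu := norm_u_sub_one ha hb hn1 (by linarith) (by linarith)
  have hnpos : (0 : ℝ) < (n : ℝ) := by positivity
  have hhalf : ‖hG a b (2 * n) * hG a b (2 * n + 1) - 1‖ ≤ 1 / 2 := by
    refine hu.trans ?_
    rw [div_le_iff₀ (by positivity)]
    nlinarith [sq_nonneg ((n : ℝ) - 1)]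
  have hlog := Complex.norm_log_one_add_half_le_self
    (z := hG a b (2 * n) * hG a b (2 * n + 1) - 1) hhalf
  rw [add_sub_cancel] at hlog
  calc ‖Complex.log (hG a b (2 * n) * hG a b (2 * n + 1))‖
      ≤ 3 / 2 * ‖hG a b (2 * n) * hG a b (2 * n + 1) - 1‖ := hlog
    _ ≤ 3 / 2 * (‖a - b‖ / (n : ℝ) ^ 2) := by linarith
    _ = 3 / 2 * ‖a - b‖ * (1 / ((k : ℝ) + 1) ^ 2) := by
        push_cast [hn]; ring

lemma hG_tendsto_one {a b : ℂ} (ha : ∀ k : ℕ, a ≠ -((k : ℂ) + 1))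
    (hb : ∀ k : ℕ, b ≠ -((k : ℂ) + 1)) :
    Tendsto (fun n => hG a b n) atTop (𝓝 1) := by
  rw [← tendsto_sub_nhds_zero_iff]
  refine squeeze_zero_norm' ?_ (tendsto_const_div_atTop_nhds_zero_nat (2 * ‖a - b‖))
  · filter_upwards [eventually_ge_atTop (⌈2 * (‖a‖ + ‖b‖)⌉₊ + 1)] with n hn
    have hceil : (⌈2 * (‖a‖ + ‖b‖)⌉₊ : ℝ) ≥ 2 * (‖a‖ + ‖b‖) := Nat.le_ceil _
    have hnr : 2 * (‖a‖ + ‖b‖) + 1 ≤ (n : ℝ) := by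
      have : (⌈2 * (‖a‖ + ‖b‖)⌉₊ + 1 : ℝ) ≤ (n : ℝ) := by exact_mod_cast hn
      linarith
    have h0a : (0 : ℝ) ≤ ‖a‖ := norm_nonneg _
    have h0b : (0 : ℝ) ≤ ‖b‖ := norm_nonneg _
    have hn1 : 1 ≤ n := by
      by_contra h
      push_neg at h
      interval_cases n
      simp at hnr
      linarith
    have hA := nat_add_ne_zero ha hn1
    have hB := nat_add_ne_zero hb hn1
    have hnpos : (0 : ℝ) < (n : ℝ) := by positivity
    have hXa : (n : ℝ) / 2 ≤ ‖(n : ℂ) + a‖ := by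
      have := le_norm_nat_add a n; linarith
    have hXb : (n : ℝ) / 2 ≤ ‖(n : ℂ) + b‖ := by
      have := le_norm_nat_add b n; linarith
    rcases tm_zero_or_one n with h | h
    · have he : hG a b n - 1 = (a - b) / ((n : ℂ) + b) := by
        simp only [hG, h]
        norm_num
        field_simp
        ring
      rw [he, norm_div]
      rw [div_le_div_iff₀ (by linarith) hnpos]
      nlinarith [norm_nonneg (a - b)]
    · have he : hG a b n - 1 = (b - a) / ((n : ℂ) + a) := by
        simp only [hG, h]
        norm_num
        field_simp
        ring
      rw [he, norm_div, norm_sub_rev]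
      rw [div_le_div_iff₀ (by linarith) hnpos]
      nlinarith [norm_nonneg (a - b)]

lemma tendsto_even_odd {f : ℕ → ℂ} {L : ℂ}
    (he : Tendsto (fun n => f (2 * n)) atTop (𝓝 L))
    (ho : Tendsto (fun n => f (2 * n + 1)) atTop (𝓝 L)) :
    Tendsto f atTop (𝓝 L) := by
  rw [Metric.tendsto_atTop] at he ho ⊢
  intro ε hε
  obtain ⟨N1, h1⟩ := he ε hε
  obtain ⟨N2, h2⟩ := ho ε hε
  refine ⟨2 * (N1 + N2) + 2, fun n hn => ?_⟩
  rcases Nat.even_or_odd n with ⟨m, rfl⟩ | ⟨m, rfl⟩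
  · have := h1 m (by omega)
    rwa [two_mul] at this
  · exact h2 m (by omega)

theorem prod_general_identity (a b : ℂ)
    (ha : ∀ k : ℕ, a ≠ -((k : ℂ) + 1)) (hb : ∀ k : ℕ, b ≠ -((k : ℂ) + 1)) :
    Tendsto (fun N => ∏ n ∈ Finset.range N,
        (((((n : ℂ) + 1) + a) * (2 * ((n : ℂ) + 1) + a + 1) * (2 * ((n : ℂ) + 1) + b)) /
          ((2 * ((n : ℂ) + 1) + a) * (((n : ℂ) + 1) + b) * (2 * ((n : ℂ) + 1) + b + 1)))
          ^ ((-1 : ℤ) ^ tm (n + 1)))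
      atTop (𝓝 ((b + 1) / (a + 1))) := by
  set u : ℕ → ℂ := fun k => hG a b (2 * (k + 1)) * hG a b (2 * (k + 1) + 1) with hu
  set f : ℕ → Unit → ℂ := fun k _ => u k with hf
  have hfn : ∀ (x : Unit) (k : ℕ), f k x ≠ 0 := fun _ k =>
    mul_ne_zero (hG_ne ha hb (by omega)) (hG_ne ha hb (by omega))
  have hsum : ∀ x : Unit, Summable fun k => Complex.log (f k x) := fun _ =>
    summable_log_u ha hb
  have hprod : HasProd u (∏' k, u k) :=
    (Complex.multipliable_of_summable_log (f := u) (hsum ())).hasProd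
  have hLne : (∏' k, u k) ≠ 0 := by
    have h := Complex.cexp_tsum_eq_tprod (f := u) (fun k => hfn () k) (hsum ())
    rw [← h]
    exact Complex.exp_ne_zero _
  set Q : ℕ → ℂ := fun M => ∏ n ∈ range M, hG a b (n + 1) with hQ
  set L : ℂ := ∏' k, u k with hL
  have hQodd_eq : ∀ M, Q (2 * M + 1) = hG a b 1 * ∏ k ∈ range M, u k := by
    intro M
    have h1 : Q (2 * M + 1) = (∏ j ∈ range (2 * M), hG a b (j + 2)) * hG a b 1 :=
      Finset.prod_range_succ' _ _
    have h2 : ∏ k ∈ range M, u k = ∏ j ∈ range (2 * M), hG a b (j + 2) := by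
      rw [← pair_prod (fun j => hG a b (j + 2)) M]
      exact prod_congr rfl fun k _ => by simp only [hu]; ring_nf
    rw [h1, h2, mul_comm]
  have hodd : Tendsto (fun M => Q (2 * M + 1)) atTop (𝓝 (hG a b 1 * L)) := by
    have := (hprod.tendsto_prod_nat).const_mul (hG a b 1)
    exact this.congr fun M => (hQodd_eq M).symm
  have h2M1 : Tendsto (fun M : ℕ => 2 * M + 1) atTop atTop :=
    tendsto_atTop_mono (fun n => by simp only [id_eq]; omega) tendsto_id
  have hGcomp : Tendsto (fun M => hG a b (2 * M + 1)) atTop (𝓝 1) :=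
    (hG_tendsto_one ha hb).comp h2M1
  have heven : Tendsto (fun M => Q (2 * M)) atTop (𝓝 (hG a b 1 * L)) := by
    have hdiv1 := hodd.div hGcomp one_ne_zero
    rw [div_one] at hdiv1
    refine hdiv1.congr fun M => ?_
    simp only [Pi.div_apply]
    have hps : Q (2 * M + 1) = Q (2 * M) * hG a b (2 * M + 1) := by
      simp only [hQ]
      exact Finset.prod_range_succ _ _
    rw [hps, mul_div_cancel_right₀ _ (hG_ne ha hb (by omega))]
  have hQt : Tendsto Q atTop (𝓝 (hG a b 1 * L)) := tendsto_even_odd heven hodd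
  have hL0 : hG a b 1 * L ≠ 0 := mul_ne_zero (hG_ne ha hb le_rfl) hLne
  have hratio : Tendsto (fun N => Q N / Q (2 * N + 1)) atTop (𝓝 1) := by
    have := hQt.div hodd hL0
    rwa [div_self hL0] at this
  have hG1val : hG a b 1 = (b + 1) / (a + 1) := by
    have h1 : tm 1 = 1 := by
      have := tm_two_mul_add_one 0
      simp only [tm] at this ⊢; simpa using this
    simp only [hG, h1, pow_one, Nat.cast_one, zpow_neg_one, inv_div]
    ring
  have final := hratio.const_mul (hG a b 1)
  rw [mul_one] at final
  have hfin := final.congr fun N => (key_identity_s7 ha hb N).symm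
  rwa [hG1val] at hfin
end

section
/- For all a ∈ ℂ \ {-1,-2,-3,...}, ∏_{n≥1} [((n+a)(2n+a+1)²) / ((2n+a)(2n+a+2)(n+a+1))]^{(-1)^{t_n}} = (a+2)/(a+1). -/
open Filter Finset Topology

namespace TMII

/-- signs -/
def ε (n : ℕ) : ℤ := (-1) ^ tm n

lemma neg_one_pow_mod (s : ℕ) : ((-1 : ℤ)) ^ (s % 2) = (-1) ^ s := by
  conv_rhs => rw [← Nat.div_add_mod s 2, pow_add, pow_mul]
  norm_num

lemma ε_eq (n : ℕ) : ε n = (-1) ^ (Nat.digits 2 n).sum := by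
  simpa [ε, tm] using neg_one_pow_mod (Nat.digits 2 n).sum

lemma ε_two_mul (n : ℕ) : ε (2 * n) = ε n := by
  rcases Nat.eq_zero_or_pos n with h | h
  · simp [h]
  · rw [ε_eq, ε_eq, Nat.digits_def' (by norm_num : (1:ℕ) < 2) (by omega)]
    have h1 : 2 * n % 2 = 0 := by omega
    have h2 : 2 * n / 2 = n := by omega
    simp [h1, h2]

lemma ε_two_mul_add_one (n : ℕ) : ε (2 * n + 1) = -ε n := by
  rw [ε_eq, ε_eq, Nat.digits_def' (by norm_num : (1:ℕ) < 2) (by omega)]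
  have h1 : (2 * n + 1) % 2 = 1 := by omega
  have h2 : (2 * n + 1) / 2 = n := by omega
  rw [h1, h2, List.sum_cons, pow_add, pow_one]
  ring

lemma ε_cases (n : ℕ) : ε n = 1 ∨ ε n = -1 := by
  rcases Nat.mod_two_eq_zero_or_one (Nat.digits 2 n).sum with h | h
  · left; simp [ε, tm, h]
  · right; simp [ε, tm, h]

end TMII

namespace TMII

variable (a : ℂ)

noncomputable def g (n : ℕ) : ℂ := ((n : ℂ) + a) / ((n : ℂ) + a + 1)

noncomputable def f (n : ℕ) : ℂ :=
  (((n : ℂ) + a) * (2 * (n : ℂ) + a + 1) ^ 2) /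
    ((2 * (n : ℂ) + a) * (2 * (n : ℂ) + a + 2) * ((n : ℂ) + a + 1))

section

variable (ha : ∀ k : ℕ, a ≠ -((k : ℂ) + 1))
include ha

lemma hz : ∀ m : ℕ, 0 < m → ((m : ℂ) + a) ≠ 0 := by
  intro m hm hc
  apply ha (m - 1)
  have : ((m - 1 : ℕ) : ℂ) = (m : ℂ) - 1 := by
    push_cast [Nat.cast_sub hm]; ring
  rw [this]
  linear_combination hc

lemma hz' : ∀ m : ℕ, ((m : ℂ) + a + 1) ≠ 0 := by
  intro m hc
  apply hz a ha (m + 1)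
  · omega
  · push_cast; linear_combination hc

lemma g_ne_zero {m : ℕ} (hm : 0 < m) : g a m ≠ 0 := by
  unfold g
  exact div_ne_zero (hz a ha m hm) (hz' a ha m)

lemma gpow_ne_zero {m : ℕ} (hm : 0 < m) (z : ℤ) : g a m ^ z ≠ 0 :=
  zpow_ne_zero z (g_ne_zero a ha hm)

/-- key algebraic identity. -/
lemma key (k : ℕ) (hk : 0 < k) :
    f a k * g a (2 * k) * (g a (2 * k + 1))⁻¹ = g a k := by
  have h1 : ((k : ℂ) + a + 1) ≠ 0 := hz' a ha k
  have h2 : (2 * (k : ℂ) + a) ≠ 0 := by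
    have := hz a ha (2 * k) (by omega); push_cast at this
    intro hc; apply this; linear_combination hc
  have h3 : (2 * (k : ℂ) + a + 1) ≠ 0 := by
    have := hz a ha (2 * k + 1) (by omega); push_cast at this
    intro hc; apply this; linear_combination hc
  have h4 : (2 * (k : ℂ) + a + 2) ≠ 0 := by
    have := hz' a ha (2 * k + 1); push_cast at this
    intro hc; apply this; linear_combination hc
  have h5 : (2 * (k : ℂ) + 1 + a) ≠ 0 := by
    intro hc; apply h3; linear_combination hc
  have h6 : (2 * (k : ℂ) + 1 + a + 1) ≠ 0 := by
    intro hc; apply h4; linear_combination hc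
  unfold f g
  push_cast
  rw [inv_div, div_mul_div_comm, div_mul_div_comm, div_eq_div_iff]
  · ring
  · exact mul_ne_zero (mul_ne_zero (mul_ne_zero (mul_ne_zero h2 h4) h1) h3) h5
  · exact h1

lemma step (k : ℕ) (hk : 0 < k) :
    f a k ^ ε k * (g a (2 * k) ^ ε (2 * k) * g a (2 * k + 1) ^ ε (2 * k + 1)) =
      g a k ^ ε k := by
  rw [ε_two_mul, ε_two_mul_add_one, zpow_neg, ← inv_zpow, ← mul_zpow, ← mul_zpow,
    ← mul_assoc, key a ha k hk]

end


noncomputable def S (M : ℕ) : ℂ := ∏ m ∈ Ico 1 (M + 1), g a m ^ ε m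

noncomputable def P (N : ℕ) : ℂ := ∏ n ∈ range N, f a (n + 1) ^ ε (n + 1)

noncomputable def U (N : ℕ) : ℂ := ∏ m ∈ Ico N (2 * N), g a m ^ ε m

section

variable (ha : ∀ k : ℕ, a ≠ -((k : ℂ) + 1))
include ha

lemma S_ne_zero (M : ℕ) : S a M ≠ 0 := by
  unfold S
  apply prod_ne_zero_iff.2
  intro m hm
  exact gpow_ne_zero a ha (by simp [Finset.mem_Ico] at hm; omega) _

lemma U_ne_zero (N : ℕ) : U a N ≠ 0 := by
  unfold U
  apply prod_ne_zero_iff.2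
  intro m hm
  simp [Finset.mem_Ico] at hm
  exact gpow_ne_zero a ha (by omega) _

lemma tel (N : ℕ) : P a N * S a (2 * N + 1) = g a 1 ^ ε 1 * S a N := by
  induction N with
  | zero => simp [P, S]
  | succ N ih =>
      have hS : S a (2 * (N + 1) + 1)
          = S a (2 * N + 1) * g a (2 * (N + 1)) ^ ε (2 * (N + 1))
            * g a (2 * (N + 1) + 1) ^ ε (2 * (N + 1) + 1) := by
        unfold S
        rw [show 2 * (N + 1) + 1 + 1 = (2 * N + 1 + 1) + 1 + 1 by ring,
          prod_Ico_succ_top (by omega), prod_Ico_succ_top (by omega)]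
        congr 2 <;> omega
      have hP : P a (N + 1) = P a N * f a (N + 1) ^ ε (N + 1) := prod_range_succ _ _
      rw [hP, hS, show S a (N + 1) = S a N * g a (N + 1) ^ ε (N + 1) by
        unfold S; rw [show (N + 1) + 1 = (N + 1) + 1 by rfl, prod_Ico_succ_top (by omega)]]
      calc P a N * f a (N + 1) ^ ε (N + 1) *
            (S a (2 * N + 1) * g a (2 * (N + 1)) ^ ε (2 * (N + 1))
              * g a (2 * (N + 1) + 1) ^ ε (2 * (N + 1) + 1))
          = (P a N * S a (2 * N + 1)) *
            (f a (N + 1) ^ ε (N + 1) * (g a (2 * (N + 1)) ^ ε (2 * (N + 1))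
              * g a (2 * (N + 1) + 1) ^ ε (2 * (N + 1) + 1))) := by ring
        _ = (g a 1 ^ ε 1 * S a N) * g a (N + 1) ^ ε (N + 1) := by
            rw [ih, step a ha (N + 1) (by omega)]
        _ = g a 1 ^ ε 1 * (S a N * g a (N + 1) ^ ε (N + 1)) := by ring

lemma S_ratio (N : ℕ) : S a (2 * N + 1) = S a N * U a (N + 1) := by
  unfold S U
  rw [show 2 * (N + 1) = 2 * N + 1 + 1 by ring,
    ← Finset.prod_Ico_consecutive (fun m => g a m ^ ε m) (by omega : 1 ≤ N + 1)
      (by omega : N + 1 ≤ 2 * N + 1 + 1)]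

lemma P_eq (N : ℕ) : P a N = g a 1 ^ ε 1 * (U a (N + 1))⁻¹ := by
  have h := tel a ha N
  rw [S_ratio a ha N] at h
  have hS := S_ne_zero a ha N
  have hU := U_ne_zero a ha (N + 1)
  field_simp
  apply mul_right_cancel₀ hS
  linear_combination h

end


/-! ### general product estimates -/

lemma norm_prod_sub_one_le {ι : Type*} (s : Finset ι) (c : ι → ℂ) :
    ‖(∏ i ∈ s, c i) - 1‖ ≤ (∏ i ∈ s, (1 + ‖c i - 1‖)) - 1 := by
  induction s using Finset.cons_induction with
  | empty => simp
  | cons i s his ih =>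
    rw [Finset.prod_cons, Finset.prod_cons]
    have hp : ‖∏ j ∈ s, c j‖ ≤ ∏ j ∈ s, (1 + ‖c j - 1‖) := by
      have h1 : ‖∏ j ∈ s, c j‖ ≤ ‖(∏ j ∈ s, c j) - 1‖ + 1 := by
        calc ‖∏ j ∈ s, c j‖ = ‖((∏ j ∈ s, c j) - 1) + 1‖ := by congr 1; ring
          _ ≤ ‖(∏ j ∈ s, c j) - 1‖ + ‖(1:ℂ)‖ := norm_add_le _ _
          _ = ‖(∏ j ∈ s, c j) - 1‖ + 1 := by simp
      linarith [ih]
    calc ‖c i * ∏ j ∈ s, c j - 1‖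
        = ‖(c i - 1) * ∏ j ∈ s, c j + ((∏ j ∈ s, c j) - 1)‖ := by congr 1; ring
      _ ≤ ‖(c i - 1) * ∏ j ∈ s, c j‖ + ‖(∏ j ∈ s, c j) - 1‖ := norm_add_le _ _
      _ = ‖c i - 1‖ * ‖∏ j ∈ s, c j‖ + ‖(∏ j ∈ s, c j) - 1‖ := by rw [norm_mul]
      _ ≤ ‖c i - 1‖ * (∏ j ∈ s, (1 + ‖c j - 1‖)) + ((∏ j ∈ s, (1 + ‖c j - 1‖)) - 1) :=
          add_le_add (mul_le_mul_of_nonneg_left hp (norm_nonneg _)) ih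
      _ = (1 + ‖c i - 1‖) * (∏ j ∈ s, (1 + ‖c j - 1‖)) - 1 := by ring

lemma prod_one_add_le_exp {ι : Type*} (s : Finset ι) (u : ι → ℝ) (hu : ∀ i ∈ s, 0 ≤ u i) :
    ∏ i ∈ s, (1 + u i) ≤ Real.exp (∑ i ∈ s, u i) := by
  rw [Real.exp_sum]
  refine Finset.prod_le_prod (fun i hi => by linarith [hu i hi]) (fun i hi => ?_)
  linarith [Real.add_one_le_exp (u i)]

lemma prod_Ico_two (F : ℕ → ℂ) (j L : ℕ) :
    ∏ m ∈ Ico (2 * j) (2 * j + 2 * L), F m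
      = ∏ k ∈ Ico j (j + L), (F (2 * k) * F (2 * k + 1)) := by
  induction L with
  | zero => simp
  | succ L ih =>
      rw [show 2 * j + 2 * (L + 1) = (2 * j + 2 * L) + 1 + 1 by ring,
        prod_Ico_succ_top (by omega), prod_Ico_succ_top (by omega),
        show j + (L + 1) = (j + L) + 1 by ring, prod_Ico_succ_top (by omega), ih,
        show 2 * j + 2 * L = 2 * (j + L) by ring]
      ring

namespace TMII

variable (a : ℂ)

/-- threshold -/
noncomputable def K : ℕ := ⌈‖a‖⌉₊ + 2

lemma K_ge : ‖a‖ + 2 ≤ (K a : ℝ) := by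
  have := Nat.le_ceil ‖a‖
  unfold K
  push_cast
  linarith

lemma K_ge2 : 2 ≤ K a := by unfold K; omega

section

variable (ha : ∀ k : ℕ, a ≠ -((k : ℂ) + 1))
include ha

lemma pair_bound (k : ℕ) (hk : K a ≤ k) :
    ‖g a (2 * k) ^ ε (2 * k) * g a (2 * k + 1) ^ ε (2 * k + 1) - 1‖ ≤ 2 / (k : ℝ) ^ 2 := by
  have hk2 : 2 ≤ k := le_trans (K_ge2 a) hk
  have hkR : (2:ℝ) ≤ (k:ℝ) := by exact_mod_cast hk2
  have hak : ‖a‖ ≤ (k : ℝ) - 2 := by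
    have h1 := K_ge a
    have h2 : (K a : ℝ) ≤ (k : ℝ) := by exact_mod_cast hk
    linarith
  set w : ℂ := 2 * (k : ℂ) + a + 1 with hw
  have hw0 : w ≠ 0 := by
    have := hz' a ha (2 * k); push_cast at this
    intro hc; apply this; linear_combination hc
  have hwn : (k : ℝ) ≤ ‖w‖ := by
    have h := norm_sub_norm_le (2 * (k : ℂ) + 1) (-a)
    have e1 : (2 * (k : ℂ) + 1) - (-a) = w := by rw [hw]; ring
    have e2 : (2 * (k : ℂ) + 1) = ((2 * k + 1 : ℕ) : ℂ) := by push_cast; ring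
    rw [e1, e2, Complex.norm_natCast, norm_neg] at h
    push_cast at h
    linarith
  have hw1 : (0:ℝ) < (k:ℝ) ^ 2 := by positivity
  have hw2 : (k:ℝ) ^ 2 ≤ ‖w‖ ^ 2 := by nlinarith
  set h : ℂ := g a (2 * k) * (g a (2 * k + 1))⁻¹ with hh
  have h3 : 2 * (k : ℂ) + a + 1 ≠ 0 := hw0
  have h5 : 2 * (k : ℂ) + 1 + a ≠ 0 := by
    intro hc; apply hw0; rw [hw]; linear_combination hc
  have h6 : 2 * (k : ℂ) + 1 + a + 1 ≠ 0 := by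
    have := hz' a ha (2 * k + 1); push_cast at this
    intro hc; apply this; linear_combination hc
  have hid : h - 1 = -(w ^ 2)⁻¹ := by
    rw [hh, hw]
    unfold g
    push_cast
    rw [inv_div]
    field_simp
    ring
  have hnh : ‖h - 1‖ ≤ 1 / (k : ℝ) ^ 2 := by
    rw [hid, norm_neg, norm_inv, norm_pow, inv_eq_one_div]
    apply one_div_le_one_div_of_le hw1
    calc (k:ℝ)^2 ≤ ‖w‖^2 := hw2
      _ = ‖w‖^2 := rfl
  have goal_eq : g a (2 * k) ^ ε (2 * k) * g a (2 * k + 1) ^ ε (2 * k + 1) = h ^ ε k := by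
    rw [ε_two_mul, ε_two_mul_add_one, zpow_neg, ← inv_zpow, ← mul_zpow, hh]
  rw [goal_eq]
  have hq : 1 / (k:ℝ)^2 ≤ 1/4 := by
    apply one_div_le_one_div_of_le (by norm_num)
    nlinarith
  rcases ε_cases k with he | he <;> rw [he]
  · rw [zpow_one]
    calc ‖h - 1‖ ≤ 1 / (k:ℝ)^2 := hnh
      _ ≤ 2 / (k:ℝ)^2 := by gcongr <;> norm_num
  · rw [zpow_neg_one]
    have hhn : (1:ℝ)/2 ≤ ‖h‖ := by
      have h1 := norm_sub_norm_le (1:ℂ) (1 - h)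
      have e : (1:ℂ) - (1 - h) = h := by ring
      rw [e, norm_one, norm_sub_rev] at h1
      linarith
    have hne0 : h ≠ 0 := by
      intro h0; rw [h0, norm_zero] at hhn; linarith
    have hinv : h⁻¹ - 1 = (1 - h) * h⁻¹ := by field_simp
    rw [hinv, norm_mul, norm_inv, norm_sub_rev]
    have hinvle : ‖h‖⁻¹ ≤ 2 := by
      rw [← one_div]
      calc 1 / ‖h‖ ≤ 1 / ((1:ℝ)/2) := one_div_le_one_div_of_le (by norm_num) hhn
        _ = 2 := by norm_num
    calc ‖h - 1‖ * ‖h‖⁻¹ ≤ (1 / (k:ℝ)^2) * 2 :=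
          mul_le_mul hnh hinvle (by positivity) (by positivity)
      _ = 2 / (k:ℝ)^2 := by ring

lemma bd_bound (m : ℕ) (hm : 2 * K a ≤ m) : ‖g a m ^ ε m - 1‖ ≤ 4 / (m : ℝ) := by
  have hK2 := K_ge2 a
  have hm4 : 4 ≤ m := by omega
  have hmR : (4:ℝ) ≤ (m:ℝ) := by exact_mod_cast hm4
  have hKm : (K a : ℝ) * 2 ≤ (m:ℝ) := by exact_mod_cast by omega
  have hak : ‖a‖ + 2 ≤ (m:ℝ) / 2 + 2:= by
    have := K_ge a; linarith
  have hd0 : ((m:ℂ) + a + 1) ≠ 0 := hz' a ha m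
  have hdn : (m:ℝ) / 2 ≤ ‖(m:ℂ) + a + 1‖ := by
    have h := norm_sub_norm_le ((m : ℂ) + 1) (-a)
    have e1 : ((m : ℂ) + 1) - (-a) = (m:ℂ) + a + 1 := by ring
    have e2 : ((m : ℂ) + 1) = ((m + 1 : ℕ) : ℂ) := by push_cast; ring
    rw [e1, e2, Complex.norm_natCast, norm_neg] at h
    push_cast at h
    linarith
  have hdpos : (0:ℝ) < (m:ℝ)/2 := by linarith
  have hid : g a m - 1 = -((m:ℂ) + a + 1)⁻¹ := by
    unfold g; field_simp; ring
  have hng : ‖g a m - 1‖ ≤ 2 / (m:ℝ) := by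
    rw [hid, norm_neg, norm_inv, ← one_div]
    calc 1 / ‖(m:ℂ) + a + 1‖ ≤ 1 / ((m:ℝ)/2) := one_div_le_one_div_of_le hdpos hdn
      _ = 2 / (m:ℝ) := by rw [one_div_div]
  have h2m : 2 / (m:ℝ) ≤ 1/2 := by
    rw [div_le_div_iff₀ (by linarith) (by norm_num)]; linarith
  rcases ε_cases m with he | he <;> rw [he]
  · rw [zpow_one]
    calc ‖g a m - 1‖ ≤ 2 / (m:ℝ) := hng
      _ ≤ 4 / (m:ℝ) := by gcongr <;> norm_num
  · rw [zpow_neg_one]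
    have hhn : (1:ℝ)/2 ≤ ‖g a m‖ := by
      have h1 := norm_sub_norm_le (1:ℂ) (1 - g a m)
      have e : (1:ℂ) - (1 - g a m) = g a m := by ring
      rw [e, norm_one, norm_sub_rev] at h1
      linarith
    have hne0 : g a m ≠ 0 := by
      intro h0; rw [h0, norm_zero] at hhn; linarith
    have hinv : (g a m)⁻¹ - 1 = (1 - g a m) * (g a m)⁻¹ := by field_simp
    rw [hinv, norm_mul, norm_inv, norm_sub_rev]
    have hinvle : ‖g a m‖⁻¹ ≤ 2 := by
      rw [← one_div]
      calc 1 / ‖g a m‖ ≤ 1 / ((1:ℝ)/2) := one_div_le_one_div_of_le (by norm_num) hhn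
        _ = 2 := by norm_num
    calc ‖g a m - 1‖ * ‖g a m‖⁻¹ ≤ (2 / (m:ℝ)) * 2 :=
          mul_le_mul hng hinvle (by positivity) (by positivity)
      _ = 4 / (m:ℝ) := by ring

end

end TMII


lemma norm_mul_sub_one_le (x y : ℂ) (Q : ℝ) (hy : ‖y - 1‖ ≤ Q - 1) :
    ‖x * y - 1‖ ≤ (1 + ‖x - 1‖) * Q - 1 := by
  have hyn : ‖y‖ ≤ Q := by
    have h1 : ‖y‖ ≤ ‖y - 1‖ + 1 := by
      calc ‖y‖ = ‖(y - 1) + 1‖ := by congr 1; ring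
        _ ≤ ‖y - 1‖ + ‖(1:ℂ)‖ := norm_add_le _ _
        _ = ‖y - 1‖ + 1 := by simp
    linarith
  calc ‖x * y - 1‖ = ‖(x - 1) * y + (y - 1)‖ := by congr 1; ring
    _ ≤ ‖(x - 1) * y‖ + ‖y - 1‖ := norm_add_le _ _
    _ = ‖x - 1‖ * ‖y‖ + ‖y - 1‖ := by rw [norm_mul]
    _ ≤ ‖x - 1‖ * Q + (Q - 1) :=
        add_le_add (mul_le_mul_of_nonneg_left hyn (norm_nonneg _)) hy
    _ = (1 + ‖x - 1‖) * Q - 1 := by ring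

/-- the comparison sequence -/
noncomputable def r (k : ℕ) : ℝ := 2 / (k : ℝ) ^ 2

lemma r_nonneg (k : ℕ) : 0 ≤ r k := by unfold r; positivity

lemma r_summable : Summable r := by
  have h := Real.summable_one_div_nat_pow.mpr (by norm_num : 1 < 2)
  have h2 := h.mul_left 2
  apply h2.congr
  intro n
  unfold r
  rw [mul_one_div]

lemma window_sum (j l : ℕ) : ∑ k ∈ Ico j l, r k ≤ ∑' i, r (i + j) := by
  rw [Finset.sum_Ico_eq_sum_range]
  have hs : Summable (fun i => r (i + j)) := (summable_nat_add_iff j).mpr r_summable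
  calc ∑ i ∈ range (l - j), r (j + i) = ∑ i ∈ range (l - j), r (i + j) := by
        apply Finset.sum_congr rfl; intros; rw [add_comm]
    _ ≤ ∑' i, r (i + j) := Summable.sum_le_tsum _ (fun i _ => r_nonneg _) hs

namespace TMII

variable (a : ℂ)

section

variable (ha : ∀ k : ℕ, a ≠ -((k : ℂ) + 1))
include ha

lemma U_tendsto : Tendsto (fun N => U a N) atTop (𝓝 1) := by
  have hb : Tendsto (fun N : ℕ => (1 + 4 / (N:ℝ)) * Real.exp (∑' i, r (i + N / 2)) - 1)
      atTop (𝓝 0) := by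
    have h1 : Tendsto (fun N : ℕ => 4 / (N:ℝ)) atTop (𝓝 0) :=
      tendsto_const_div_atTop_nhds_zero_nat 4
    have h2 : Tendsto (fun N : ℕ => N / 2) atTop atTop := by
      apply Filter.tendsto_atTop_atTop.mpr
      intro b; exact ⟨2 * b, fun n hn => by omega⟩
    have h3 : Tendsto (fun N : ℕ => Real.exp (∑' i, r (i + N / 2))) atTop (𝓝 1) := by
      have ht := (tendsto_sum_nat_add r).comp h2
      have := (Real.continuous_exp.tendsto 0).comp ht
      simpa [Function.comp_def] using this
    have := ((tendsto_const_nhds (x := (1:ℝ))).add h1).mul h3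
    have h4 := this.sub (tendsto_const_nhds (x := (1:ℝ)))
    simpa using h4
  have hev : ∀ᶠ N in atTop,
      ‖U a N - 1‖ ≤ (1 + 4 / (N:ℝ)) * Real.exp (∑' i, r (i + N / 2)) - 1 := by
    filter_upwards [eventually_ge_atTop (2 * K a + 2)] with N hN
    have hKa := K_ge2 a
    set c : ℕ → ℂ := fun k => g a (2 * k) ^ ε (2 * k) * g a (2 * k + 1) ^ ε (2 * k + 1)
      with hc
    have hQpos : ∀ T : ℝ, (0:ℝ) < Real.exp T := fun T => Real.exp_pos T
    have h4N : (0:ℝ) ≤ 4 / (N:ℝ) := by positivity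
    rcases Nat.even_or_odd N with ⟨j, hj⟩ | ⟨j, hj⟩
    · -- even case, N = j + j
      have hj2 : N = 2 * j := by omega
      have hjK : K a ≤ j := by omega
      have hN2 : N / 2 = j := by omega
      have hU : U a N = ∏ k ∈ Ico j (j + j), c k := by
        unfold U
        rw [hj2, show 2 * (2 * j) = 2 * j + 2 * j by ring]
        exact prod_Ico_two _ j j
      have hQ : ∏ k ∈ Ico j (j + j), (1 + ‖c k - 1‖) ≤ Real.exp (∑' i, r (i + j)) := by
        calc ∏ k ∈ Ico j (j + j), (1 + ‖c k - 1‖)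
            ≤ Real.exp (∑ k ∈ Ico j (j + j), ‖c k - 1‖) :=
              prod_one_add_le_exp _ _ (fun k _ => norm_nonneg _)
          _ ≤ Real.exp (∑ k ∈ Ico j (j + j), r k) := by
              apply Real.exp_le_exp.mpr
              apply Finset.sum_le_sum
              intro k hk
              simp only [Finset.mem_Ico] at hk
              exact pair_bound a ha k (le_trans hjK hk.1)
          _ ≤ Real.exp (∑' i, r (i + j)) := Real.exp_le_exp.mpr (window_sum j _)
      calc ‖U a N - 1‖ ≤ (∏ k ∈ Ico j (j + j), (1 + ‖c k - 1‖)) - 1 := by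
            rw [hU]; exact norm_prod_sub_one_le _ _
        _ ≤ Real.exp (∑' i, r (i + j)) - 1 := by linarith
        _ ≤ (1 + 4 / (N:ℝ)) * Real.exp (∑' i, r (i + N / 2)) - 1 := by
            rw [hN2]
            nlinarith [hQpos (∑' i, r (i + j))]
    · -- odd case, N = 2 * j + 1
      have hjK : K a ≤ j := by omega
      have hN2 : N / 2 = j := by omega
      have hU : U a N = g a N ^ ε N * ∏ k ∈ Ico (j + 1) ((j + 1) + j), c k := by
        unfold U
        rw [hj]
        rw [Finset.prod_eq_prod_Ico_succ_bot (by omega : 2 * j + 1 < 2 * (2 * j + 1))]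
        congr 1
        rw [show 2 * j + 1 + 1 = 2 * (j + 1) by ring,
          show 2 * (2 * j + 1) = 2 * (j + 1) + 2 * j by ring]
        exact prod_Ico_two _ (j + 1) j
      have hQ : ∏ k ∈ Ico (j + 1) ((j + 1) + j), (1 + ‖c k - 1‖)
          ≤ Real.exp (∑' i, r (i + j)) := by
        calc ∏ k ∈ Ico (j + 1) ((j + 1) + j), (1 + ‖c k - 1‖)
            ≤ Real.exp (∑ k ∈ Ico (j + 1) ((j + 1) + j), ‖c k - 1‖) :=
              prod_one_add_le_exp _ _ (fun k _ => norm_nonneg _)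
          _ ≤ Real.exp (∑ k ∈ Ico (j + 1) ((j + 1) + j), r k) := by
              apply Real.exp_le_exp.mpr
              apply Finset.sum_le_sum
              intro k hk
              simp only [Finset.mem_Ico] at hk
              exact pair_bound a ha k (by omega)
          _ ≤ Real.exp (∑ k ∈ Ico j ((j + 1) + j), r k) := by
              apply Real.exp_le_exp.mpr
              exact Finset.sum_le_sum_of_subset_of_nonneg
                (Finset.Ico_subset_Ico (by omega) le_rfl) (fun k _ _ => r_nonneg k)
          _ ≤ Real.exp (∑' i, r (i + j)) := Real.exp_le_exp.mpr (window_sum j _)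
      have hprod : ‖(∏ k ∈ Ico (j + 1) ((j + 1) + j), c k) - 1‖
          ≤ Real.exp (∑' i, r (i + j)) - 1 := by
        have := norm_prod_sub_one_le (Ico (j + 1) ((j + 1) + j)) c
        linarith
      have hbd : ‖g a N ^ ε N - 1‖ ≤ 4 / (N:ℝ) := bd_bound a ha N (by omega)
      calc ‖U a N - 1‖
          ≤ (1 + ‖g a N ^ ε N - 1‖) * Real.exp (∑' i, r (i + j)) - 1 := by
            rw [hU]; exact norm_mul_sub_one_le _ _ _ hprod
        _ ≤ (1 + 4 / (N:ℝ)) * Real.exp (∑' i, r (i + N / 2)) - 1 := by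
            rw [hN2]
            nlinarith [hQpos (∑' i, r (i + j))]
  have h0 : Tendsto (fun N => U a N - 1) atTop (𝓝 0) := squeeze_zero_norm' hev hb
  have := h0.add (tendsto_const_nhds (x := (1:ℂ)))
  simpa using this

end

end TMII

end TMII

theorem prod_identity_ii (a : ℂ) (ha : ∀ k : ℕ, a ≠ -((k : ℂ) + 1)) :
    Tendsto (fun N => ∏ n ∈ Finset.range N,
        (((((n : ℂ) + 1) + a) * (2 * ((n : ℂ) + 1) + a + 1) ^ 2) /
          ((2 * ((n : ℂ) + 1) + a) * (2 * ((n : ℂ) + 1) + a + 2) * (((n : ℂ) + 1) + a + 1)))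
          ^ ((-1 : ℤ) ^ tm (n + 1)))
      atTop (𝓝 ((a + 2) / (a + 1))) := by
  open TMII in
  have hP : ∀ N, (∏ n ∈ Finset.range N,
        (((((n : ℂ) + 1) + a) * (2 * ((n : ℂ) + 1) + a + 1) ^ 2) /
          ((2 * ((n : ℂ) + 1) + a) * (2 * ((n : ℂ) + 1) + a + 2) * (((n : ℂ) + 1) + a + 1)))
          ^ ((-1 : ℤ) ^ tm (n + 1))) = TMII.P a N := by
    intro N
    unfold TMII.P
    apply Finset.prod_congr rfl
    intro n _
    have hb : (((((n : ℂ) + 1) + a) * (2 * ((n : ℂ) + 1) + a + 1) ^ 2) /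
          ((2 * ((n : ℂ) + 1) + a) * (2 * ((n : ℂ) + 1) + a + 2) * (((n : ℂ) + 1) + a + 1)))
        = TMII.f a (n + 1) := by
      unfold TMII.f
      push_cast
      ring_nf
    rw [hb]
    rfl
  have heps : TMII.ε 1 = -1 := by
    have h1 : Nat.digits 2 1 = [1] := by
      rw [Nat.digits_def' (by norm_num : (1:ℕ) < 2) (by norm_num)]
      norm_num
    unfold TMII.ε tm
    rw [h1]
    norm_num
  have hval : TMII.g a 1 ^ TMII.ε 1 * (1:ℂ)⁻¹ = (a + 2) / (a + 1) := by
    rw [heps, zpow_neg_one, inv_one, mul_one]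
    unfold TMII.g
    rw [inv_div]
    push_cast
    congr 1 <;> ring
  have hU1 : Tendsto (fun N => TMII.U a (N + 1)) atTop (𝓝 1) :=
    (TMII.U_tendsto a ha).comp (Filter.tendsto_add_atTop_nat 1)
  have h2 : Tendsto (fun N => TMII.g a 1 ^ TMII.ε 1 * (TMII.U a (N + 1))⁻¹) atTop
      (𝓝 (TMII.g a 1 ^ TMII.ε 1 * (1:ℂ)⁻¹)) :=
    tendsto_const_nhds.mul (hU1.inv₀ one_ne_zero)
  rw [hval] at h2
  have hfun : (fun N => ∏ n ∈ Finset.range N,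
        (((((n : ℂ) + 1) + a) * (2 * ((n : ℂ) + 1) + a + 1) ^ 2) /
          ((2 * ((n : ℂ) + 1) + a) * (2 * ((n : ℂ) + 1) + a + 2) * (((n : ℂ) + 1) + a + 1)))
          ^ ((-1 : ℤ) ^ tm (n + 1)))
      = (fun N => TMII.g a 1 ^ TMII.ε 1 * (TMII.U a (N + 1))⁻¹) :=
    funext fun N => (hP N).trans (TMII.P_eq a ha N)
  rw [hfun]
  exact h2
end

section
/- ∏_{n≥0} ((4n+1)/(4n+3))^{(-1)^{t_n}} = 1/2. -/
open Filter Finset Topology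

namespace ProdB

def e (n : ℕ) : ℤ := (-1) ^ tm n

noncomputable def W (n : ℕ) : ℝ := ((4 * (n : ℝ) + 1) / (4 * (n : ℝ) + 3)) ^ e n
noncomputable def Q (n : ℕ) : ℝ := ((2 * (n : ℝ)) / (2 * (n : ℝ) + 1)) ^ e n
noncomputable def L (n : ℕ) : ℝ := Real.log (Q n)
noncomputable def S (M : ℕ) : ℝ := ∑ k ∈ range M, L k
noncomputable def d (j : ℕ) : ℝ := L (2 * j) + L (2 * j + 1)

lemma neg_one_pow_mod_two (m : ℕ) : ((-1 : ℤ)) ^ (m % 2) = (-1) ^ m := by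
  conv_rhs => rw [← Nat.div_add_mod m 2]
  rw [pow_add, pow_mul]
  norm_num

lemma tm_two_mul (n : ℕ) : tm (2 * n) = tm n := by
  rcases Nat.eq_zero_or_pos n with h | h
  · simp [h]
  · unfold tm
    rw [Nat.digits_def' (by norm_num : 1 < 2) (by omega)]
    simp [Nat.mul_mod_right, Nat.mul_div_cancel_left _ (by norm_num : 0 < 2)]

lemma e_two_mul (n : ℕ) : e (2 * n) = e n := by unfold e; rw [tm_two_mul]

lemma e_two_mul_add_one (n : ℕ) : e (2 * n + 1) = -e n := by
  unfold e tm
  rw [Nat.digits_def' (by norm_num : 1 < 2) (by omega)]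
  have h1 : (2 * n + 1) % 2 = 1 := by omega
  have h2 : (2 * n + 1) / 2 = n := by omega
  rw [h1, h2, List.sum_cons, neg_one_pow_mod_two, neg_one_pow_mod_two, pow_add, pow_one]
  ring

lemma key (N : ℕ) (hN : 1 ≤ N) : W N * Q (2 * N) * Q (2 * N + 1) = Q N := by
  have hx : (1 : ℝ) ≤ (N : ℝ) := by exact_mod_cast hN
  unfold W Q
  rw [e_two_mul, e_two_mul_add_one, zpow_neg, ← inv_zpow, ← mul_zpow, ← mul_zpow]
  congr 1
  push_cast
  rw [inv_div]
  field_simp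
  ring

lemma master (N : ℕ) (hN : 1 ≤ N) :
    (∏ k ∈ range N, W k) * (∏ k ∈ Ico N (2 * N), Q k) = 1 / 2 := by
  induction N, hN using Nat.le_induction with
  | base =>
    have h1 : Finset.Ico 1 2 = {1} := rfl
    have htm0 : tm 0 = 0 := by simp [tm]
    have htm1 : tm 1 = 1 := by simp [tm]
    simp only [show 2 * 1 = 2 from rfl, h1, Finset.prod_range_one, Finset.prod_singleton]
    unfold W Q e
    rw [htm0, htm1]
    norm_num
  | succ N hN ih =>
    have h1 : N + 1 ≤ 2 * N := by omega
    have h3 : N < 2 * N := by omega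
    rw [Finset.prod_range_succ, show 2 * (N + 1) = (2 * N + 1) + 1 from by ring,
      Finset.prod_Ico_succ_top (by omega : N + 1 ≤ 2 * N + 1),
      Finset.prod_Ico_succ_top h1]
    rw [Finset.prod_eq_prod_Ico_succ_bot h3] at ih
    have hkey := key N hN
    calc (∏ k ∈ range N, W k) * W N *
          ((∏ k ∈ Ico (N+1) (2*N), Q k) * Q (2*N) * Q (2*N+1))
        = ((∏ k ∈ range N, W k) * ((∏ k ∈ Ico (N+1) (2*N), Q k)) *
            (W N * Q (2*N) * Q (2*N+1))) := by ring
      _ = ((∏ k ∈ range N, W k) * ((∏ k ∈ Ico (N+1) (2*N), Q k)) * Q N) := by rw [hkey]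
      _ = (∏ k ∈ range N, W k) * (Q N * ∏ k ∈ Ico (N+1) (2*N), Q k) := by ring
      _ = 1 / 2 := ih

lemma abs_e (n : ℕ) : |((e n : ℤ) : ℝ)| = 1 := by
  unfold e; push_cast; rw [abs_pow, abs_neg, abs_one, one_pow]

lemma L_eq (n : ℕ) :
    L n = (e n : ℝ) * Real.log ((2 * (n : ℝ)) / (2 * (n : ℝ) + 1)) := by
  unfold L Q; rw [Real.log_zpow]

lemma Q_pos {n : ℕ} (hn : 1 ≤ n) : 0 < Q n := by
  have hx : (1 : ℝ) ≤ (n : ℝ) := by exact_mod_cast hn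
  unfold Q
  apply zpow_pos
  positivity

lemma d_bound {j : ℕ} (hj : 1 ≤ j) : ‖d j‖ ≤ 1 / (j : ℝ) ^ 2 := by
  have hx : (1 : ℝ) ≤ (j : ℝ) := by exact_mod_cast hj
  have hxpos : (0 : ℝ) < j := by linarith
  unfold d
  rw [L_eq, L_eq, e_two_mul, e_two_mul_add_one]
  push_cast
  have hb : (0:ℝ) < 4 * (j:ℝ) / (4 * (j:ℝ) + 1) := by positivity
  have hc : (0:ℝ) < (4 * (j:ℝ) + 2) / (4 * (j:ℝ) + 3) := by positivity
  have hform : ((e j : ℝ)) * Real.log (2 * (2 * (j:ℝ)) / (2 * (2 * (j:ℝ)) + 1))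
      + (-(e j : ℝ)) * Real.log (2 * (2 * (j:ℝ) + 1) / (2 * (2 * (j:ℝ) + 1) + 1))
      = (e j : ℝ) * Real.log ((4 * (j:ℝ) / (4 * (j:ℝ) + 1)) /
          ((4 * (j:ℝ) + 2) / (4 * (j:ℝ) + 3))) := by
    rw [Real.log_div (ne_of_gt hb) (ne_of_gt hc)]
    ring_nf
  rw [hform]
  set y : ℝ := (4 * (j:ℝ) / (4 * (j:ℝ) + 1)) / ((4 * (j:ℝ) + 2) / (4 * (j:ℝ) + 3)) with hy
  have hypos : 0 < y := by positivity
  have hyle : y ≤ 1 := by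
    rw [hy, div_le_one hc, div_le_div_iff₀ (by positivity) (by positivity)]
    nlinarith
  have hinv : y⁻¹ - 1 = 2 / (4 * (j:ℝ) * (4 * (j:ℝ) + 3)) := by
    rw [hy]; field_simp; ring
  have hlogy : |Real.log y| ≤ 1 / (j:ℝ) ^ 2 := by
    rw [abs_of_nonpos (Real.log_nonpos (le_of_lt hypos) hyle), ← Real.log_inv]
    calc Real.log y⁻¹ ≤ y⁻¹ - 1 := Real.log_le_sub_one_of_pos (by positivity)
      _ = 2 / (4 * (j:ℝ) * (4 * (j:ℝ) + 3)) := hinv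
      _ ≤ 1 / (j:ℝ) ^ 2 := by
          rw [div_le_div_iff₀ (by positivity) (by positivity)]
          nlinarith
  rw [Real.norm_eq_abs, abs_mul, abs_e, one_mul]
  exact hlogy

lemma summable_d : Summable d := by
  have hsum : Summable (fun j : ℕ => 1 / (j : ℝ) ^ 2) := by
    exact_mod_cast Real.summable_one_div_nat_pow.mpr one_lt_two
  apply hsum.of_norm_bounded_eventually
  rw [Nat.cofinite_eq_atTop]
  filter_upwards [eventually_ge_atTop 1] with j hj
  exact d_bound hj

lemma sum_range_two_mul (f : ℕ → ℝ) (M : ℕ) :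
    ∑ k ∈ range (2 * M), f k = ∑ j ∈ range M, (f (2 * j) + f (2 * j + 1)) := by
  induction M with
  | zero => simp
  | succ M ih =>
    rw [show 2 * (M + 1) = (2 * M + 1) + 1 from by ring, Finset.sum_range_succ,
      Finset.sum_range_succ, ih, Finset.sum_range_succ]
    ring

lemma S_two_mul (M : ℕ) : S (2 * M) = ∑ j ∈ range M, d j := by
  unfold S d; exact sum_range_two_mul L M

lemma tendsto_S_two_mul : Tendsto (fun M => S (2 * M)) atTop (𝓝 (∑' j, d j)) :=
  summable_d.hasSum.tendsto_sum_nat.congr fun M => (S_two_mul M).symm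

lemma tendsto_L : Tendsto L atTop (𝓝 0) := by
  have h0 : Tendsto (fun n : ℕ => 1 / (2 * (n : ℝ) + 1)) atTop (𝓝 0) := by
    apply Tendsto.comp (tendsto_inv_atTop_zero.congr fun x => (one_div x).symm)
    apply tendsto_atTop_add_const_right
    exact (tendsto_natCast_atTop_atTop).const_mul_atTop (by norm_num)
  have h1 : Tendsto (fun n : ℕ => 2 * (n : ℝ) / (2 * (n : ℝ) + 1)) atTop (𝓝 1) := by
    have := tendsto_const_nhds.sub h0 (α := ℕ) (f := fun _ => (1:ℝ))
    rw [sub_zero] at this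
    apply this.congr'
    filter_upwards [eventually_ge_atTop 1] with n hn
    have hx : (1:ℝ) ≤ (n:ℝ) := by exact_mod_cast hn
    field_simp
    ring
  have hlog : Tendsto (fun n : ℕ => Real.log (2 * (n:ℝ) / (2 * (n:ℝ) + 1)))
      atTop (𝓝 0) := by
    have := (Real.continuousAt_log one_ne_zero).tendsto.comp h1
    simpa [Function.comp_def] using this
  apply squeeze_zero_norm _ (by simpa using hlog.norm)
  intro n
  rw [L_eq, Real.norm_eq_abs, abs_mul, abs_e, one_mul]

lemma tendsto_S : Tendsto S atTop (𝓝 (∑' j, d j)) := by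
  have hhalf : Tendsto (fun M : ℕ => M / 2) atTop atTop := by
    apply tendsto_atTop_atTop.mpr
    intro b
    exact ⟨2 * b, fun M hM => by omega⟩
  have h2half : Tendsto (fun M : ℕ => 2 * (M / 2)) atTop atTop := by
    apply tendsto_atTop_atTop.mpr
    intro b
    exact ⟨2 * b + 1, fun M hM => by omega⟩
  have hTcomp : Tendsto (fun M => S (2 * (M / 2))) atTop (𝓝 (∑' j, d j)) :=
    tendsto_S_two_mul.comp hhalf
  have hrem : ∀ M, S M = S (2 * (M / 2)) +
      (if M % 2 = 1 then L (2 * (M / 2)) else 0) := by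
    intro M
    rcases Nat.mod_two_eq_zero_or_one M with h | h
    · have : 2 * (M / 2) = M := by omega
      rw [h]; simp [this]
    · have hM : M = 2 * (M / 2) + 1 := by omega
      rw [h, if_pos rfl]
      conv_lhs => rw [hM]
      unfold S
      rw [Finset.sum_range_succ]
  have hrem0 : Tendsto (fun M => (if M % 2 = 1 then L (2 * (M / 2)) else 0 : ℝ))
      atTop (𝓝 0) := by
    apply squeeze_zero_norm _ (by simpa using (tendsto_L.comp h2half).norm)
    intro M
    split
    · rfl
    · simp
  have := hTcomp.add hrem0
  rw [add_zero] at this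
  exact this.congr fun M => (hrem M).symm

lemma prod_eq_exp (N : ℕ) (hN : 1 ≤ N) :
    ∏ k ∈ range N, W k = (1 / 2 : ℝ) * Real.exp (S N - S (2 * N)) := by
  have hIco : ∏ k ∈ Ico N (2 * N), Q k = Real.exp (S (2 * N) - S N) := by
    rw [show S (2 * N) - S N = ∑ k ∈ Ico N (2 * N), L k from
      (Finset.sum_Ico_eq_sub _ (by omega : N ≤ 2 * N)).symm, Real.exp_sum]
    apply Finset.prod_congr rfl
    intro k hk
    rw [Finset.mem_Ico] at hk
    exact (Real.exp_log (Q_pos (by omega))).symm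
  have h := master N hN
  rw [hIco] at h
  have hx := Real.exp_ne_zero (S (2 * N) - S N)
  field_simp at h ⊢
  rw [show S N - S (2*N) = -(S (2*N) - S N) from by ring, Real.exp_neg]
  field_simp
  linarith [h]

end ProdB

theorem prod_b :
    Tendsto (fun N => ∏ n ∈ Finset.range N,
        (((4 * (n : ℝ) + 1) / (4 * (n : ℝ) + 3))) ^ ((-1 : ℤ) ^ tm n))
      atTop (𝓝 ((1 / 2 : ℝ))) := by
  have hdiff : Tendsto (fun N => ProdB.S N - ProdB.S (2 * N)) atTop (𝓝 0) := by
    have := ProdB.tendsto_S.sub ProdB.tendsto_S_two_mul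
    rwa [sub_self] at this
  have hexp : Tendsto (fun N => (1 / 2 : ℝ) * Real.exp (ProdB.S N - ProdB.S (2 * N)))
      atTop (𝓝 (1 / 2)) := by
    have h := (Real.continuous_exp.tendsto 0).comp hdiff
    have h2 := tendsto_const_nhds (α := ℕ) (x := (1/2 : ℝ)) |>.mul h
    simpa using h2
  have heq : (fun N => ∏ n ∈ Finset.range N,
      (((4 * (n : ℝ) + 1) / (4 * (n : ℝ) + 3))) ^ ((-1 : ℤ) ^ tm n))
      = fun N => ∏ n ∈ Finset.range N, ProdB.W n := rfl
  rw [heq]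
  apply hexp.congr'
  filter_upwards [eventually_ge_atTop 1] with N hN
  exact (ProdB.prod_eq_exp N hN).symm
end

section
/- ∏_{n≥1} [((2n-1)(4n+1)) / ((2n+1)(4n-1))]^{(-1)^{t_n}} = 2. -/
open Filter Finset Topology

namespace ProdC

def e (n : ℕ) : ℤ := (-1) ^ tm n

lemma neg_one_pow_mod_two (k : ℕ) : ((-1 : ℤ)) ^ (k % 2) = (-1) ^ k := by
  conv_rhs => rw [← Nat.div_add_mod k 2, pow_add, pow_mul]
  norm_num

lemma e_def' (n : ℕ) : e n = (-1) ^ ((Nat.digits 2 n).sum) := by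
  rw [e, tm, neg_one_pow_mod_two]

lemma e_pm (n : ℕ) : e n = 1 ∨ e n = -1 := by
  rcases Nat.even_or_odd (tm n) with h | h
  · left; exact h.neg_one_pow
  · right; exact h.neg_one_pow

lemma e_zero : e 0 = 1 := by simp [e, tm]

lemma e_two_mul (n : ℕ) : e (2 * n) = e n := by
  rcases Nat.eq_zero_or_pos n with rfl | hn
  · rfl
  · rw [e_def', e_def', Nat.digits_def' (by norm_num : 1 < 2) (by omega : 0 < 2 * n)]
    simp [Nat.mul_div_cancel_left _ (by norm_num : 0 < 2)]

lemma e_odd (n : ℕ) : e (2 * n + 1) = - e n := by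
  rw [e_def', e_def', Nat.digits_def' (by norm_num : 1 < 2) (by omega : 0 < 2 * n + 1)]
  have h1 : (2 * n + 1) % 2 = 1 := by omega
  have h2 : (2 * n + 1) / 2 = n := by omega
  rw [h1, h2]
  simp [pow_add, pow_succ]

lemma e_even' (n : ℕ) : e (2 * n + 2) = e (n + 1) := by
  rw [show 2 * n + 2 = 2 * (n + 1) by ring, e_two_mul]


lemma merge_tendsto (x : ℕ → ℝ) (c : ℕ) (L : ℝ)
    (h1 : Tendsto (fun N => x (2 * N + c)) atTop (𝓝 L))
    (h2 : Tendsto (fun N => x (2 * N + c + 1)) atTop (𝓝 L)) :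
    Tendsto x atTop (𝓝 L) := by
  rw [Metric.tendsto_atTop] at h1 h2 ⊢
  intro ε hε
  obtain ⟨N₁, hN₁⟩ := h1 ε hε
  obtain ⟨N₂, hN₂⟩ := h2 ε hε
  refine ⟨2 * N₁ + 2 * N₂ + c + 2, fun n hn => ?_⟩
  rcases Nat.even_or_odd (n - c) with ⟨k, hk⟩ | ⟨k, hk⟩
  · have h : n = 2 * k + c := by omega
    rw [h]; exact hN₁ k (by omega)
  · have h : n = 2 * k + c + 1 := by omega
    rw [h]; exact hN₂ k (by omega)

lemma prod_pair (g : ℕ → ℝ) (c N : ℕ) :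
    ∏ n ∈ range (2 * N + c), g n
      = (∏ n ∈ range c, g n) * ∏ k ∈ range N, (g (2 * k + c) * g (2 * k + c + 1)) := by
  induction N with
  | zero => simp
  | succ N ih =>
      rw [show 2 * (N + 1) + c = (2 * N + c) + 1 + 1 by ring, prod_range_succ, prod_range_succ,
        ih, prod_range_succ]
      ring

lemma tendsto_prod_zpow (u : ℕ → ℝ) (τ : ℕ → ℤ) (hu : ∀ k, 0 < u k)
    (hsum : Summable fun k => |Real.log (u k)|)
    (hτ : ∀ k, τ k = 1 ∨ τ k = -1) :
    ∃ L : ℝ, 0 < L ∧ Tendsto (fun N => ∏ k ∈ range N, u k ^ τ k) atTop (𝓝 L) := by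
  set ℓ : ℕ → ℝ := fun k => (τ k : ℝ) * Real.log (u k) with hℓ
  have habs : ∀ k, |ℓ k| = |Real.log (u k)| := by
    intro k; rcases hτ k with h | h <;> simp [hℓ, h]
  have hsl : Summable ℓ := by
    rw [← summable_abs_iff]
    simpa only [habs] using hsum
  have key : ∀ N, ∏ k ∈ range N, u k ^ τ k = Real.exp (∑ k ∈ range N, ℓ k) := by
    intro N
    rw [Real.exp_sum]
    refine Finset.prod_congr rfl fun k _ => ?_
    show u k ^ τ k = Real.exp ((τ k : ℝ) * Real.log (u k))
    rw [← Real.log_zpow, Real.exp_log (zpow_pos (hu k) _)]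
  refine ⟨Real.exp (∑' k, ℓ k), Real.exp_pos _, ?_⟩
  simp only [key]
  exact (Real.continuous_exp.tendsto _).comp hsl.hasSum.tendsto_sum_nat

lemma summable_abs_log (u : ℕ → ℝ) (h1 : ∀ k, 0 < u k) (h2 : ∀ k, u k ≤ 1)
    (h3 : ∀ k, 1 / u k - 1 ≤ 4 / ((k : ℝ) + 1) ^ 2) :
    Summable fun k => |Real.log (u k)| := by
  have hs0 : Summable (fun n : ℕ => 1 / ((n : ℝ)) ^ 2) :=
    Real.summable_one_div_nat_pow.mpr one_lt_two
  have hs1 : Summable (fun n : ℕ => 1 / (((n : ℝ)) + 1) ^ 2) := by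
    have h := (summable_nat_add_iff 1).mpr hs0
    refine h.congr fun n => ?_
    push_cast
    ring
  have hs : Summable (fun n : ℕ => 4 / (((n : ℝ)) + 1) ^ 2) := by
    have := hs1.mul_left 4
    refine this.congr fun n => ?_
    ring
  refine Summable.of_nonneg_of_le (fun k => abs_nonneg _) (fun k => ?_) hs
  have hlog : |Real.log (u k)| = -Real.log (u k) :=
    abs_of_nonpos (Real.log_nonpos (le_of_lt (h1 k)) (h2 k))
  rw [hlog, ← Real.log_inv]
  calc Real.log (u k)⁻¹ ≤ (u k)⁻¹ - 1 := Real.log_le_sub_one_of_pos (inv_pos.2 (h1 k))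
    _ ≤ 4 / ((k : ℝ) + 1) ^ 2 := by
        have h := h3 k
        rw [inv_eq_one_div]
        linarith

lemma zpow_tendsto_one (b : ℕ → ℝ) (σ : ℕ → ℤ) (hσ : ∀ n, σ n = 1 ∨ σ n = -1)
    (h1 : Tendsto b atTop (𝓝 1)) :
    Tendsto (fun n => b n ^ σ n) atTop (𝓝 1) := by
  have hinv : Tendsto (fun n => (b n)⁻¹) atTop (𝓝 1) := by
    simpa using h1.inv₀ one_ne_zero
  have hmin : Tendsto (fun n => min (b n) (b n)⁻¹) atTop (𝓝 1) := by
    simpa using h1.min hinv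
  have hmax : Tendsto (fun n => max (b n) (b n)⁻¹) atTop (𝓝 1) := by
    simpa using h1.max hinv
  refine tendsto_of_tendsto_of_tendsto_of_le_of_le hmin hmax (fun n => ?_) (fun n => ?_) <;>
    rcases hσ n with h | h <;>
      simp [h, zpow_neg, min_le_left, min_le_right, le_max_left, le_max_right]

lemma tendsto_frac (p q : ℝ) (hq : ∀ n : ℕ, 2 * (n : ℝ) + q ≠ 0) :
    Tendsto (fun n : ℕ => (2 * (n : ℝ) + p) / (2 * (n : ℝ) + q)) atTop (𝓝 1) := by
  have hinf : Tendsto (fun n : ℕ => 2 * (n : ℝ) + q) atTop atTop := by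
    apply Filter.tendsto_atTop_add_const_right
    exact tendsto_natCast_atTop_atTop.const_mul_atTop two_pos
  have h0 : Tendsto (fun n : ℕ => (2 * (n : ℝ) + q)⁻¹) atTop (𝓝 0) := hinf.inv_tendsto_atTop
  have hmain : Tendsto (fun n : ℕ => 1 + (p - q) * (2 * (n : ℝ) + q)⁻¹) atTop (𝓝 1) := by
    have := (tendsto_const_nhds : Tendsto (fun _ : ℕ => (1 : ℝ)) atTop (𝓝 1)).add
      (h0.const_mul (p - q))
    simpa using this
  refine hmain.congr fun n => ?_
  have h := hq n
  field_simp
  ring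

lemma conv_full (b : ℕ → ℝ) (σ : ℕ → ℤ) (c : ℕ) (u : ℕ → ℝ) (τ : ℕ → ℤ)
    (hb : ∀ n, 0 < b n) (hσ : ∀ n, σ n = 1 ∨ σ n = -1)
    (hb1 : Tendsto b atTop (𝓝 1))
    (hu : ∀ k, 0 < u k) (hτ : ∀ k, τ k = 1 ∨ τ k = -1)
    (hsum : Summable fun k => |Real.log (u k)|)
    (hpair : ∀ k, b (2 * k + c) ^ σ (2 * k + c) * b (2 * k + c + 1) ^ σ (2 * k + c + 1)
      = u k ^ τ k) :
    ∃ L : ℝ, 0 < L ∧ Tendsto (fun N => ∏ n ∈ range N, b n ^ σ n) atTop (𝓝 L) := by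
  obtain ⟨M, hM, hMt⟩ := tendsto_prod_zpow u τ hu hsum hτ
  set X : ℕ → ℝ := fun N => ∏ n ∈ range N, b n ^ σ n with hX
  have hXpos : ∀ N, 0 < X N := fun N => Finset.prod_pos (fun n _ => zpow_pos (hb n) _)
  refine ⟨X c * M, mul_pos (hXpos c) hM, ?_⟩
  have heven : Tendsto (fun N => X (2 * N + c)) atTop (𝓝 (X c * M)) := by
    have hXe : ∀ N, X (2 * N + c) = X c * ∏ k ∈ range N, u k ^ τ k := by
      intro N
      rw [hX]
      simp only
      rw [prod_pair]
      congr 1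
      exact Finset.prod_congr rfl fun k _ => hpair k
    simp only [hXe]
    exact hMt.const_mul _
  have hone : Tendsto (fun n => b n ^ σ n) atTop (𝓝 1) := zpow_tendsto_one b σ hσ hb1
  have hodd : Tendsto (fun N => X (2 * N + c + 1)) atTop (𝓝 (X c * M)) := by
    have hXo : ∀ N, X (2 * N + c + 1) = X (2 * N + c) * (b (2 * N + c)) ^ σ (2 * N + c) := by
      intro N; rw [hX]; exact prod_range_succ _ _
    simp only [hXo]
    have harg : Tendsto (fun N : ℕ => 2 * N + c) atTop atTop := by
      apply tendsto_atTop_mono (fun N => by omega : ∀ N : ℕ, N ≤ 2 * N + c)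
      exact tendsto_id
    have hcomp := hone.comp harg
    have := heven.mul hcomp
    simpa using this
  exact merge_tendsto X c _ heven hodd



noncomputable def S (N : ℕ) : ℝ :=
  ∏ n ∈ range N, ((2 * (n : ℝ) + 1) / (2 * (n : ℝ) + 3)) ^ e (n + 1)

noncomputable def T (N : ℕ) : ℝ :=
  ∏ m ∈ range N, ((4 * (m : ℝ) + 3) / (4 * (m : ℝ) + 1)) ^ e m

noncomputable def W (N : ℕ) : ℝ :=
  ∏ n ∈ range N, ((2 * (n : ℝ) + 1) / (2 * (n : ℝ) + 2)) ^ e n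

noncomputable def Q (N : ℕ) : ℝ :=
  ∏ n ∈ range N, ((2 * (n : ℝ) + 2) / (2 * (n : ℝ) + 3)) ^ e (n + 1)

noncomputable def R (N : ℕ) : ℝ :=
  ∏ n ∈ range N, (((n : ℝ) + 1) / ((n : ℝ) + 2)) ^ e (n + 1)

noncomputable def P (N : ℕ) : ℝ :=
  ∏ n ∈ range N,
    ((((2 * ((n : ℝ) + 1) - 1) * (4 * ((n : ℝ) + 1) + 1)) /
      ((2 * ((n : ℝ) + 1) + 1) * (4 * ((n : ℝ) + 1) - 1)))) ^ e (n + 1)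

lemma S_succ (N : ℕ) :
    S (N + 1) = S N * ((2 * (N : ℝ) + 1) / (2 * (N : ℝ) + 3)) ^ e (N + 1) :=
  prod_range_succ _ _

lemma T_succ (N : ℕ) :
    T (N + 1) = T N * ((4 * (N : ℝ) + 3) / (4 * (N : ℝ) + 1)) ^ e N :=
  prod_range_succ _ _

lemma W_succ (N : ℕ) :
    W (N + 1) = W N * ((2 * (N : ℝ) + 1) / (2 * (N : ℝ) + 2)) ^ e N :=
  prod_range_succ _ _

lemma Q_succ (N : ℕ) :
    Q (N + 1) = Q N * ((2 * (N : ℝ) + 2) / (2 * (N : ℝ) + 3)) ^ e (N + 1) :=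
  prod_range_succ _ _

lemma R_succ (N : ℕ) :
    R (N + 1) = R N * (((N : ℝ) + 1) / ((N : ℝ) + 2)) ^ e (N + 1) :=
  prod_range_succ _ _

lemma P_succ (N : ℕ) :
    P (N + 1) = P N *
      ((((2 * ((N : ℝ) + 1) - 1) * (4 * ((N : ℝ) + 1) + 1)) /
        ((2 * ((N : ℝ) + 1) + 1) * (4 * ((N : ℝ) + 1) - 1)))) ^ e (N + 1) :=
  prod_range_succ _ _

lemma W_pos (N : ℕ) : 0 < W N :=
  Finset.prod_pos fun n _ => zpow_pos (by positivity) _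

lemma S_pos (N : ℕ) : 0 < S N :=
  Finset.prod_pos fun n _ => zpow_pos (by positivity) _

lemma idB1 (N : ℕ) : W (N + 1) * Q N = (1 / 2) * R N := by
  induction N with
  | zero =>
      simp [W, Q, R, prod_range_one, e_zero]
  | succ N ih =>
      rw [W_succ (N + 1), Q_succ, R_succ]
      have hr : (((N : ℝ)) + 1) / (((N : ℝ)) + 2)
          = ((2 * (((N + 1 : ℕ)) : ℝ) + 1) / (2 * (((N + 1 : ℕ)) : ℝ) + 2)) *
            ((2 * (N : ℝ) + 2) / (2 * (N : ℝ) + 3)) := by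
        have h1 : ((N : ℝ)) + 2 ≠ 0 := by positivity
        have h2 : (2 * (N : ℝ) + 3) ≠ 0 := by positivity
        have h3 : (2 * (((N + 1 : ℕ)) : ℝ) + 2) ≠ 0 := by positivity
        push_cast at h3 ⊢
        field_simp
        ring
      rw [hr, mul_zpow]
      linear_combination (((2 * (((N + 1 : ℕ)) : ℝ) + 1) / (2 * (((N + 1 : ℕ)) : ℝ) + 2)) ^ e (N + 1)
        * ((2 * (N : ℝ) + 2) / (2 * (N : ℝ) + 3)) ^ e (N + 1)) * ih

lemma idB2 (N : ℕ) : R (2 * N) * W N = Q N := by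
  induction N with
  | zero => simp [R, W, Q]
  | succ N ih =>
      rw [show 2 * (N + 1) = 2 * N + 1 + 1 by ring, R_succ, R_succ, W_succ, Q_succ]
      have he : e (2 * N + 1 + 1) = e (N + 1) := by
        rw [show 2 * N + 1 + 1 = 2 * (N + 1) by ring, e_two_mul]
      rw [he, e_odd]
      have hswap : ((((2 * N : ℕ) : ℝ) + 1) / (((2 * N : ℕ) : ℝ) + 2)) ^ (-(e N))
          = ((2 * (N : ℝ) + 2) / (2 * (N : ℝ) + 1)) ^ (e N) := by
        rw [zpow_neg, ← inv_zpow, inv_div]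
        congr 1
        push_cast
        ring
      rw [hswap]
      have hcancel : ((2 * (N : ℝ) + 2) / (2 * (N : ℝ) + 1)) ^ (e N)
          * ((2 * (N : ℝ) + 1) / (2 * (N : ℝ) + 2)) ^ (e N) = 1 := by
        rw [← mul_zpow]
        rw [show ((2 * (N : ℝ) + 2) / (2 * (N : ℝ) + 1)) * ((2 * (N : ℝ) + 1) / (2 * (N : ℝ) + 2))
            = 1 by
          have h1 : (2 * (N : ℝ) + 1) ≠ 0 := by positivity
          have h2 : (2 * (N : ℝ) + 2) ≠ 0 := by positivity
          field_simp]
        exact one_zpow _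
      have hb2 : ((((2 * N + 1 : ℕ) : ℝ) + 1) / (((2 * N + 1 : ℕ) : ℝ) + 2)) ^ e (N + 1)
          = ((2 * (N : ℝ) + 2) / (2 * (N : ℝ) + 3)) ^ e (N + 1) := by
        congr 1
        push_cast
        ring
      rw [hb2]
      linear_combination ((2 * (N : ℝ) + 2) / (2 * (N : ℝ) + 3)) ^ e (N + 1) * ih
        + ((2 * (N : ℝ) + 2) / (2 * (N : ℝ) + 3)) ^ e (N + 1) * R (2 * N) * W N * hcancel

lemma idC (N : ℕ) : W (2 * N) * T N * W N = 1 := by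
  induction N with
  | zero => simp [W, T]
  | succ N ih =>
      rw [show 2 * (N + 1) = 2 * N + 1 + 1 by ring, W_succ, W_succ, T_succ, W_succ, e_two_mul,
        e_odd]
      have hswap : ((2 * (((2 * N + 1 : ℕ)) : ℝ) + 1) / (2 * (((2 * N + 1 : ℕ)) : ℝ) + 2)) ^ (-(e N))
          = ((4 * (N : ℝ) + 4) / (4 * (N : ℝ) + 3)) ^ (e N) := by
        rw [zpow_neg, ← inv_zpow, inv_div]
        congr 1
        push_cast
        ring
      rw [hswap]
      have hb1 : ((2 * (((2 * N : ℕ)) : ℝ) + 1) / (2 * (((2 * N : ℕ)) : ℝ) + 2)) ^ (e N)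
          = ((4 * (N : ℝ) + 1) / (4 * (N : ℝ) + 2)) ^ (e N) := by
        congr 1
        push_cast
        ring
      rw [hb1]
      have hcancel : ((4 * (N : ℝ) + 1) / (4 * (N : ℝ) + 2)) ^ (e N)
          * ((4 * (N : ℝ) + 4) / (4 * (N : ℝ) + 3)) ^ (e N)
          * ((4 * (N : ℝ) + 3) / (4 * (N : ℝ) + 1)) ^ (e N)
          * ((2 * (N : ℝ) + 1) / (2 * (N : ℝ) + 2)) ^ (e N) = 1 := by
        rw [← mul_zpow, ← mul_zpow, ← mul_zpow]
        rw [show ((4 * (N : ℝ) + 1) / (4 * (N : ℝ) + 2)) * ((4 * (N : ℝ) + 4) / (4 * (N : ℝ) + 3))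
            * ((4 * (N : ℝ) + 3) / (4 * (N : ℝ) + 1)) * ((2 * (N : ℝ) + 1) / (2 * (N : ℝ) + 2))
            = 1 by
          have h1 : (4 * (N : ℝ) + 1) ≠ 0 := by positivity
          have h2 : (4 * (N : ℝ) + 2) ≠ 0 := by positivity
          have h3 : (4 * (N : ℝ) + 3) ≠ 0 := by positivity
          have h4 : (2 * (N : ℝ) + 2) ≠ 0 := by positivity
          field_simp
          ring]
        exact one_zpow _
      linear_combination (((4 * (N : ℝ) + 1) / (4 * (N : ℝ) + 2)) ^ (e N)
          * ((4 * (N : ℝ) + 4) / (4 * (N : ℝ) + 3)) ^ (e N)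
          * ((4 * (N : ℝ) + 3) / (4 * (N : ℝ) + 1)) ^ (e N)
          * ((2 * (N : ℝ) + 1) / (2 * (N : ℝ) + 2)) ^ (e N)) * ih + hcancel

lemma idA (N : ℕ) : P N * S (2 * N) = S N * T N := by
  induction N with
  | zero => simp [P, S, T]
  | succ N ih =>
      rw [show 2 * (N + 1) = 2 * N + 1 + 1 by ring, P_succ, S_succ, S_succ, S_succ, T_succ]
      have he : e (2 * N + 1 + 1) = e (N + 1) := by
        rw [show 2 * N + 1 + 1 = 2 * (N + 1) by ring, e_two_mul]
      rw [he, e_odd]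
      have hswap : ((2 * (((2 * N : ℕ)) : ℝ) + 1) / (2 * (((2 * N : ℕ)) : ℝ) + 3)) ^ (-(e N))
          = ((4 * (N : ℝ) + 3) / (4 * (N : ℝ) + 1)) ^ (e N) := by
        rw [zpow_neg, ← inv_zpow, inv_div]
        congr 1
        push_cast
        ring
      rw [hswap]
      have hcomb : ((((2 * ((N : ℝ) + 1) - 1) * (4 * ((N : ℝ) + 1) + 1)) /
            ((2 * ((N : ℝ) + 1) + 1) * (4 * ((N : ℝ) + 1) - 1)))) ^ e (N + 1)
          * ((2 * (((2 * N + 1 : ℕ)) : ℝ) + 1) / (2 * (((2 * N + 1 : ℕ)) : ℝ) + 3)) ^ e (N + 1)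
          = ((2 * (N : ℝ) + 1) / (2 * (N : ℝ) + 3)) ^ e (N + 1) := by
        rw [← mul_zpow]
        congr 1
        have hN : (0 : ℝ) ≤ (N : ℝ) := Nat.cast_nonneg N
        push_cast
        rw [div_mul_div_comm, div_eq_div_iff
          (mul_ne_zero (mul_ne_zero (by positivity) (ne_of_gt (by nlinarith))) (by positivity))
          (by positivity)]
        ring
      linear_combination ((4 * (N : ℝ) + 3) / (4 * (N : ℝ) + 1)) ^ (e N) * P N * S (2 * N) * hcomb
        + ((4 * (N : ℝ) + 3) / (4 * (N : ℝ) + 1)) ^ (e N)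
          * ((2 * (N : ℝ) + 1) / (2 * (N : ℝ) + 3)) ^ e (N + 1) * ih



lemma conv_S : ∃ L : ℝ, 0 < L ∧ Tendsto S atTop (𝓝 L) := by
  have h := conv_full (fun n => (2 * (n : ℝ) + 1) / (2 * (n : ℝ) + 3)) (fun n => e (n + 1)) 1
    (fun k => ((4 * (k : ℝ) + 3) * (4 * (k : ℝ) + 7)) / ((4 * (k : ℝ) + 5) * (4 * (k : ℝ) + 5)))
    (fun k => e (k + 1))
    (fun n => by positivity) (fun n => e_pm (n + 1))
    (tendsto_frac 1 3 (fun n => by positivity))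
    (fun k => by positivity) (fun k => e_pm (k + 1))
    ?_ ?_
  · exact h
  · apply summable_abs_log
    · intro k; positivity
    · intro k
      rw [div_le_one (by positivity)]
      nlinarith [(Nat.cast_nonneg k : (0:ℝ) ≤ (k:ℝ))]
    · intro k
      have hk : (0 : ℝ) ≤ (k : ℝ) := Nat.cast_nonneg k
      have ha : (0 : ℝ) < (4 * (k : ℝ) + 3) * (4 * (k : ℝ) + 7) := by positivity
      rw [one_div_div, div_sub_one (ne_of_gt ha),
        show (4 * (k : ℝ) + 5) * (4 * (k : ℝ) + 5) - (4 * (k : ℝ) + 3) * (4 * (k : ℝ) + 7)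
          = 4 by ring, div_le_div_iff₀ ha (by positivity)]
      nlinarith
  · intro k
    have h1 : e (2 * k + 1 + 1) = e (k + 1) := by
      rw [show 2 * k + 1 + 1 = 2 * (k + 1) by ring, e_two_mul]
    have h2 : e (2 * k + 1 + 1 + 1) = -(e (k + 1)) := by
      rw [show 2 * k + 1 + 1 + 1 = 2 * (k + 1) + 1 by ring, e_odd]
    rw [h1, h2, zpow_neg, ← inv_zpow, inv_div, ← mul_zpow]
    congr 1
    push_cast
    rw [div_mul_div_comm, div_eq_div_iff (by positivity) (by positivity)]
    ring

lemma conv_W : ∃ L : ℝ, 0 < L ∧ Tendsto W atTop (𝓝 L) := by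
  have h := conv_full (fun n => (2 * (n : ℝ) + 1) / (2 * (n : ℝ) + 2)) (fun n => e n) 0
    (fun k => ((4 * (k : ℝ) + 1) * (4 * (k : ℝ) + 4)) / ((4 * (k : ℝ) + 2) * (4 * (k : ℝ) + 3)))
    (fun k => e k)
    (fun n => by positivity) (fun n => e_pm n)
    (tendsto_frac 1 2 (fun n => by positivity))
    (fun k => by positivity) (fun k => e_pm k)
    ?_ ?_
  · exact h
  · apply summable_abs_log
    · intro k; positivity
    · intro k
      rw [div_le_one (by positivity)]
      nlinarith [(Nat.cast_nonneg k : (0:ℝ) ≤ (k:ℝ))]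
    · intro k
      have hk : (0 : ℝ) ≤ (k : ℝ) := Nat.cast_nonneg k
      have ha : (0 : ℝ) < (4 * (k : ℝ) + 1) * (4 * (k : ℝ) + 4) := by positivity
      rw [one_div_div, div_sub_one (ne_of_gt ha),
        show (4 * (k : ℝ) + 2) * (4 * (k : ℝ) + 3) - (4 * (k : ℝ) + 1) * (4 * (k : ℝ) + 4)
          = 2 by ring, div_le_div_iff₀ ha (by positivity)]
      nlinarith
  · intro k
    have h1 : e (2 * k + 0) = e k := by rw [show 2 * k + 0 = 2 * k by ring, e_two_mul]
    have h2 : e (2 * k + 0 + 1) = -(e k) := by rw [show 2 * k + 0 + 1 = 2 * k + 1 by ring, e_odd]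
    rw [h1, h2, zpow_neg, ← inv_zpow, inv_div, ← mul_zpow]
    congr 1
    push_cast
    rw [div_mul_div_comm, div_eq_div_iff (by positivity) (by positivity)]
    ring

lemma conv_Q : ∃ L : ℝ, 0 < L ∧ Tendsto Q atTop (𝓝 L) := by
  have h := conv_full (fun n => (2 * (n : ℝ) + 2) / (2 * (n : ℝ) + 3)) (fun n => e (n + 1)) 1
    (fun k => ((4 * (k : ℝ) + 4) * (4 * (k : ℝ) + 7)) / ((4 * (k : ℝ) + 5) * (4 * (k : ℝ) + 6)))
    (fun k => e (k + 1))
    (fun n => by positivity) (fun n => e_pm (n + 1))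
    (tendsto_frac 2 3 (fun n => by positivity))
    (fun k => by positivity) (fun k => e_pm (k + 1))
    ?_ ?_
  · exact h
  · apply summable_abs_log
    · intro k; positivity
    · intro k
      rw [div_le_one (by positivity)]
      nlinarith [(Nat.cast_nonneg k : (0:ℝ) ≤ (k:ℝ))]
    · intro k
      have hk : (0 : ℝ) ≤ (k : ℝ) := Nat.cast_nonneg k
      have ha : (0 : ℝ) < (4 * (k : ℝ) + 4) * (4 * (k : ℝ) + 7) := by positivity
      rw [one_div_div, div_sub_one (ne_of_gt ha),
        show (4 * (k : ℝ) + 5) * (4 * (k : ℝ) + 6) - (4 * (k : ℝ) + 4) * (4 * (k : ℝ) + 7)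
          = 2 by ring, div_le_div_iff₀ ha (by positivity)]
      nlinarith
  · intro k
    have h1 : e (2 * k + 1 + 1) = e (k + 1) := by
      rw [show 2 * k + 1 + 1 = 2 * (k + 1) by ring, e_two_mul]
    have h2 : e (2 * k + 1 + 1 + 1) = -(e (k + 1)) := by
      rw [show 2 * k + 1 + 1 + 1 = 2 * (k + 1) + 1 by ring, e_odd]
    rw [h1, h2, zpow_neg, ← inv_zpow, inv_div, ← mul_zpow]
    congr 1
    push_cast
    rw [div_mul_div_comm, div_eq_div_iff (by positivity) (by positivity)]
    ring

lemma main2 : Tendsto P atTop (𝓝 2) := by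
  obtain ⟨LS, hLS, hSt⟩ := conv_S
  obtain ⟨LW, hLW, hWt⟩ := conv_W
  obtain ⟨LQ, hLQ, hQt⟩ := conv_Q
  have hdouble : Tendsto (fun N : ℕ => 2 * N) atTop atTop :=
    tendsto_atTop_mono (fun n => by simp only [id_eq]; omega) tendsto_id
  have hsucc : Tendsto (fun N : ℕ => N + 1) atTop atTop :=
    tendsto_atTop_mono (fun n => by simp only [id_eq]; omega) tendsto_id
  have hS2 : Tendsto (fun N => S (2 * N)) atTop (𝓝 LS) := hSt.comp hdouble
  have hW2 : Tendsto (fun N => W (2 * N)) atTop (𝓝 LW) := hWt.comp hdouble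
  have hW1 : Tendsto (fun N => W (N + 1)) atTop (𝓝 LW) := hWt.comp hsucc
  have hRform : ∀ N, R N = 2 * (W (N + 1) * Q N) := by
    intro N; have h := idB1 N; linarith
  have hRt : Tendsto R atTop (𝓝 (2 * (LW * LQ))) := by
    have h := (hW1.mul hQt).const_mul 2
    exact h.congr (fun N => (hRform N).symm)
  have hR2 : Tendsto (fun N => R (2 * N)) atTop (𝓝 (2 * (LW * LQ))) := hRt.comp hdouble
  have hQ' : Tendsto (fun N => R (2 * N) * W N) atTop (𝓝 (2 * (LW * LQ) * LW)) := hR2.mul hWt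
  have hQeq : Tendsto (fun N => R (2 * N) * W N) atTop (𝓝 LQ) :=
    hQt.congr (fun N => (idB2 N).symm)
  have hkey : 2 * (LW * LQ) * LW = LQ := tendsto_nhds_unique hQ' hQeq
  have hWW : LW * LW = 1 / 2 := by
    have h := mul_right_cancel₀ (ne_of_gt hLQ)
      (show (2 * (LW * LW)) * LQ = 1 * LQ by linear_combination hkey)
    linarith
  have hTform : ∀ N, T N = (W (2 * N) * W N)⁻¹ := by
    intro N
    exact eq_inv_of_mul_eq_one_left (by linear_combination idC N)
  have hTt : Tendsto T atTop (𝓝 2) := by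
    have h := (hW2.mul hWt).inv₀ (by rw [hWW]; norm_num)
    have h2 : (LW * LW)⁻¹ = 2 := by rw [hWW]; norm_num
    rw [h2] at h
    exact h.congr (fun N => (hTform N).symm)
  have hPform : ∀ N, P N = S N * T N / S (2 * N) := by
    intro N
    rw [eq_div_iff (ne_of_gt (S_pos (2 * N)))]
    exact idA N
  have hPt : Tendsto (fun N => S N * T N / S (2 * N)) atTop (𝓝 (LS * 2 / LS)) :=
    (hSt.mul hTt).div hS2 (ne_of_gt hLS)
  have hfin : LS * 2 / LS = 2 := by field_simp
  rw [hfin] at hPt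
  exact hPt.congr (fun N => (hPform N).symm)


end ProdC

theorem prod_c :
    Tendsto (fun N => ∏ n ∈ Finset.range N,
        ((((2 * ((n : ℝ) + 1) - 1) * (4 * ((n : ℝ) + 1) + 1)) / ((2 * ((n : ℝ) + 1) + 1) * (4 * ((n : ℝ) + 1) - 1)))) ^ ((-1 : ℤ) ^ tm (n + 1)))
      atTop (𝓝 ((2 : ℝ))) := by
  exact ProdC.main2
end
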